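/- arXiv:1805.04065 — 6 statements merged into one kernel-verified Lean document; each statement's English description precedes it below -/
import Mathlib

section
/- For a set partition π of {1,...,n}, the number of singular pairs equals 2(dim(π) − d(π)) − crs(π), where Sing(π) is the complement of the regular pairs; i.e., |Sing(π)| = 2·dim(π) − 2·d(π) − crs(π). -/
open scoped Classical

noncomputable section

/-- The set of arcs of a set partition `π` of `{1, ..., n}`: pairs `(i, j)` with `i < j`
lying in the same block, with no element of that block strictly between them. -/
def arcSet (n : ℕ) (π : Finpartition (Finset.Icc 1 n)) : Finset (ℕ × ℕ) :=
  (Finset.Icc 1 n ×ˢ Finset.Icc 1 n).filter fun p =>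
    ∃ B ∈ π.parts, p.1 ∈ B ∧ p.2 ∈ B ∧ p.1 < p.2 ∧ ∀ k ∈ B, ¬(p.1 < k ∧ k < p.2)

/-- `d(π)`, the number of arcs of `π`. -/
def numArcs (n : ℕ) (π : Finpartition (Finset.Icc 1 n)) : ℕ := (arcSet n π).card

/-- `dim(π) = Σ_{(i,j) ∈ D(π)} (j - i)`. -/
def dimSP (n : ℕ) (π : Finpartition (Finset.Icc 1 n)) : ℕ :=
  ∑ p ∈ arcSet n π, (p.2 - p.1)

/-- `crs(π)`, the number of crossings: unordered pairs of arcs `{(i,j),(k,l)}` with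
`i < k < j < l`, counted as ordered pairs with `i < k`. -/
def crsSP (n : ℕ) (π : Finpartition (Finset.Icc 1 n)) : ℕ :=
  ((arcSet n π ×ˢ arcSet n π).filter fun q =>
    q.1.1 < q.2.1 ∧ q.2.1 < q.1.2 ∧ q.1.2 < q.2.2).card

/-- The singular pairs relative to an arc set `D`: pairs `(i,j)`, `1 ≤ i < j ≤ n`, such that
there is `k < i` with `(k,j) ∈ D` or `l > j` with `(i,l) ∈ D`. -/
def singOf (n : ℕ) (D : Finset (ℕ × ℕ)) : Finset (ℕ × ℕ) :=
  ((Finset.Icc 1 n) ×ˢ (Finset.Icc 1 n)).filter fun p =>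
    p.1 < p.2 ∧ ((∃ k < p.1, (k, p.2) ∈ D) ∨ (∃ l > p.2, (p.1, l) ∈ D))

/-- `Sing(π)`, the singular pairs of the set partition `π` (the complement of the
`π`-regular pairs). -/
def singSP (n : ℕ) (π : Finpartition (Finset.Icc 1 n)) : Finset (ℕ × ℕ) :=
  singOf n (arcSet n π)

lemma arc_dest {n : ℕ} {π : Finpartition (Finset.Icc 1 n)} {p : ℕ × ℕ}
    (hp : p ∈ arcSet n π) :
    p.1 ∈ Finset.Icc 1 n ∧ p.2 ∈ Finset.Icc 1 n ∧ p.1 < p.2 := by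
  simp only [arcSet, Finset.mem_filter, Finset.mem_product] at hp
  obtain ⟨⟨h1, h2⟩, B, hB, _, _, hlt, _⟩ := hp
  exact ⟨h1, h2, hlt⟩

lemma arc_snd_unique {n : ℕ} {π : Finpartition (Finset.Icc 1 n)} {k k' j : ℕ}
    (h : (k, j) ∈ arcSet n π) (h' : (k', j) ∈ arcSet n π) : k = k' := by
  simp only [arcSet, Finset.mem_filter, Finset.mem_product] at h h'
  obtain ⟨_, B, hB, hk, hj, hlt, hgap⟩ := h
  obtain ⟨_, B', hB', hk', hj', hlt', hgap'⟩ := h'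
  have hBB : B = B' := π.eq_of_mem_parts hB hB' hj hj'
  subst hBB
  rcases lt_trichotomy k k' with hc | hc | hc
  · exact absurd ⟨hc, hlt'⟩ (hgap k' hk')
  · exact hc
  · exact absurd ⟨hc, hlt⟩ (hgap' k hk)

lemma arc_fst_unique {n : ℕ} {π : Finpartition (Finset.Icc 1 n)} {i l l' : ℕ}
    (h : (i, l) ∈ arcSet n π) (h' : (i, l') ∈ arcSet n π) : l = l' := by
  simp only [arcSet, Finset.mem_filter, Finset.mem_product] at h h'
  obtain ⟨_, B, hB, hi, hl, hlt, hgap⟩ := h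
  obtain ⟨_, B', hB', hi', hl', hlt', hgap'⟩ := h'
  have hBB : B = B' := π.eq_of_mem_parts hB hB' hi hi'
  subst hBB
  rcases lt_trichotomy l l' with hc | hc | hc
  · exact absurd ⟨hlt, hc⟩ (hgap' l hl)
  · exact hc
  · exact absurd ⟨hlt', hc⟩ (hgap l' hl')

/-- For a set partition `π` of `{1,...,n}`,
`|Sing(π)| = 2·dim(π) − 2·d(π) − crs(π)`. -/
theorem stmt0 (n : ℕ) (π : Finpartition (Finset.Icc 1 n)) :
    ((singSP n π).card : ℤ) =
      2 * (dimSP n π : ℤ) - 2 * (numArcs n π : ℤ) - (crsSP n π : ℤ) := by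
  classical
  set D := arcSet n π with hD
  set G := (Finset.Icc 1 n) ×ˢ (Finset.Icc 1 n) with hG
  set S1 := G.filter (fun p => p.1 < p.2 ∧ ∃ k < p.1, (k, p.2) ∈ D) with hS1
  set S2 := G.filter (fun p => p.1 < p.2 ∧ ∃ l > p.2, (p.1, l) ∈ D) with hS2
  -- singSP = S1 ∪ S2
  have hsing : singSP n π = S1 ∪ S2 := by
    ext p
    simp only [singSP, singOf, hS1, hS2, Finset.mem_union, Finset.mem_filter, ← hD, ← hG]
    constructor
    · rintro ⟨hpG, hlt, h | h⟩
      · exact Or.inl ⟨hpG, hlt, h⟩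
      · exact Or.inr ⟨hpG, hlt, h⟩
    · rintro (⟨hpG, hlt, h⟩ | ⟨hpG, hlt, h⟩)
      · exact ⟨hpG, hlt, Or.inl h⟩
      · exact ⟨hpG, hlt, Or.inr h⟩
  -- S1 as a biUnion
  have hS1eq : S1 = D.biUnion (fun a => (Finset.Ioo a.1 a.2).image (fun i => (i, a.2))) := by
    ext p
    simp only [hS1, Finset.mem_filter, Finset.mem_biUnion, Finset.mem_image, Finset.mem_Ioo,
      hG, Finset.mem_product]
    constructor
    · rintro ⟨⟨h1, h2⟩, hlt, k, hki, hkD⟩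
      exact ⟨(k, p.2), hkD, p.1, ⟨hki, hlt⟩, by simp⟩
    · rintro ⟨a, haD, i, ⟨hai, hia⟩, rfl⟩
      obtain ⟨ha1, ha2, halt⟩ := arc_dest haD
      simp only [Finset.mem_Icc] at ha1 ha2 ⊢
      refine ⟨⟨⟨le_trans ha1.1 hai.le, le_trans hia.le ha2.2⟩, ha2⟩, hia, a.1, hai, ?_⟩
      simpa using haD
  have hS2eq : S2 = D.biUnion (fun a => (Finset.Ioo a.1 a.2).image (fun j => (a.1, j))) := by
    ext p
    simp only [hS2, Finset.mem_filter, Finset.mem_biUnion, Finset.mem_image, Finset.mem_Ioo,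
      hG, Finset.mem_product]
    constructor
    · rintro ⟨⟨h1, h2⟩, hlt, l, hl, hlD⟩
      exact ⟨(p.1, l), hlD, p.2, ⟨hlt, hl⟩, by simp⟩
    · rintro ⟨a, haD, j, ⟨haj, hja⟩, rfl⟩
      obtain ⟨ha1, ha2, halt⟩ := arc_dest haD
      simp only [Finset.mem_Icc] at ha1 ha2 ⊢
      refine ⟨⟨ha1, le_trans ha1.1 haj.le, le_trans hja.le ha2.2⟩, haj, a.2, hja, ?_⟩
      simpa using haD
  -- cards of S1, S2
  have hcard1 : S1.card = ∑ a ∈ D, (Finset.Ioo a.1 a.2).card := by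
    rw [hS1eq, Finset.card_biUnion]
    · refine Finset.sum_congr rfl fun a _ => ?_
      rw [Finset.card_image_of_injective _ (fun x y h => by simpa using h)]
    · intro a ha b hb hab
      rw [Function.onFun, Finset.disjoint_left]
      rintro p hp hp'
      simp only [Finset.mem_image, Finset.mem_Ioo] at hp hp'
      obtain ⟨i, hi, rfl⟩ := hp
      obtain ⟨i', hi', he⟩ := hp'
      injection he with h1 h2
      apply hab
      have hb' : (b.1, a.2) ∈ arcSet n π := by rw [← h2]; exact hb
      have : a.1 = b.1 := arc_snd_unique (k := a.1) (j := a.2) ha hb'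
      exact Prod.ext this h2.symm
  have hcard2 : S2.card = ∑ a ∈ D, (Finset.Ioo a.1 a.2).card := by
    rw [hS2eq, Finset.card_biUnion]
    · refine Finset.sum_congr rfl fun a _ => ?_
      rw [Finset.card_image_of_injective _ (fun x y h => by simpa using h)]
    · intro a ha b hb hab
      rw [Function.onFun, Finset.disjoint_left]
      rintro p hp hp'
      simp only [Finset.mem_image, Finset.mem_Ioo] at hp hp'
      obtain ⟨j, hj, rfl⟩ := hp
      obtain ⟨j', hj', he⟩ := hp'
      injection he with h1 h2
      apply hab
      have hb' : (a.1, b.2) ∈ arcSet n π := by rw [← h1]; exact hb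
      have : a.2 = b.2 := arc_fst_unique (i := a.1) ha hb'
      exact Prod.ext h1.symm this
  -- intersection card = crossings
  have hinter : (S1 ∩ S2).card = crsSP n π := by
    rw [crsSP]
    symm
    apply Finset.card_bij (fun q _ => (q.2.1, q.1.2))
    · rintro q hq
      simp only [Finset.mem_filter, Finset.mem_product] at hq
      obtain ⟨⟨hq1, hq2⟩, hac, hcb, hbd⟩ := hq
      obtain ⟨h11, h12, _⟩ := arc_dest hq1
      obtain ⟨h21, h22, _⟩ := arc_dest hq2
      simp only [Finset.mem_inter, hS1, hS2, Finset.mem_filter, hG, Finset.mem_product]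
      exact ⟨⟨⟨h21, h12⟩, hcb, q.1.1, hac, hq1⟩,
        ⟨⟨h21, h12⟩, hcb, q.2.2, hbd, hq2⟩⟩
    · rintro q hq q' hq' he
      simp only [Finset.mem_filter, Finset.mem_product] at hq hq'
      obtain ⟨⟨hq1, hq2⟩, _, _, _⟩ := hq
      obtain ⟨⟨hq1', hq2'⟩, _, _, _⟩ := hq'
      injection he with h21 h12
      have hq1'' : (q'.1.1, q.1.2) ∈ arcSet n π := by rw [h12]; exact hq1'
      have e11 : q.1.1 = q'.1.1 := arc_snd_unique (k := q.1.1) (j := q.1.2) hq1 hq1''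
      have hq2'' : (q.2.1, q'.2.2) ∈ arcSet n π := by rw [h21]; exact hq2'
      have e22 : q.2.2 = q'.2.2 := arc_fst_unique (i := q.2.1) hq2 hq2''
      exact Prod.ext (Prod.ext e11 h12) (Prod.ext h21 e22)
    · rintro p hp
      simp only [Finset.mem_inter, hS1, hS2, Finset.mem_filter, hG, Finset.mem_product] at hp
      obtain ⟨⟨_, hlt, k, hk, hkD⟩, ⟨_, _, l, hl, hlD⟩⟩ := hp
      refine ⟨((k, p.2), (p.1, l)), ?_, by simp⟩
      simp only [Finset.mem_filter, Finset.mem_product]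
      exact ⟨⟨hkD, hlD⟩, hk, hlt, hl⟩
  -- put it together
  have hunion : ((singSP n π).card : ℤ) = (S1.card : ℤ) + S2.card - (S1 ∩ S2).card := by
    rw [hsing]
    have := Finset.card_union_add_card_inter S1 S2
    omega
  rw [hunion, hcard1, hcard2, hinter]
  have hsum : ((∑ a ∈ D, (Finset.Ioo a.1 a.2).card : ℕ) : ℤ)
      = (dimSP n π : ℤ) - (numArcs n π : ℤ) := by
    have h1 : ((∑ a ∈ D, (Finset.Ioo a.1 a.2).card : ℕ) : ℤ)
        = ∑ a ∈ D, (((a.2 - a.1 : ℕ) : ℤ) - 1) := by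
      push_cast
      refine Finset.sum_congr rfl fun a ha => ?_
      have := (arc_dest ha).2.2
      rw [Nat.card_Ioo]
      omega
    rw [h1, Finset.sum_sub_distrib, dimSP, numArcs, ← hD]
    push_cast
    simp
  rw [hsum]; ring

end
end

section
/- Superinduction satisfies Frobenius reciprocity: if H ≤ G are finite groups, G carries a supercharacter theory, φ: H → ℂ is any function and ψ: G → ℂ is a superclass function, then ⟨SInd_H^G(φ), ψ⟩ = ⟨φ, Res_H^G(ψ)⟩. -/
open scoped Classical

noncomputable section

/-- The Frobenius inner product of two functions on a finite group. -/
def innerChar (G : Type) [Group G] [Fintype G] (f₁ f₂ : G → ℂ) : ℂ :=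
  (Fintype.card G : ℂ)⁻¹ * ∑ g : G, f₁ g * (starRingEnd ℂ) (f₂ g)

/-- `χ : G → ℂ` is a character of `G`. -/
def IsChar (G : Type) [Group G] (χ : G → ℂ) : Prop :=
  ∃ V : FDRep ℂ G, χ = V.character

/-- `ξ : G → ℂ` is an irreducible character of `G`. -/
def IsIrredChar (G : Type) [Group G] (ξ : G → ℂ) : Prop :=
  ∃ V : FDRep ℂ G, CategoryTheory.Simple V ∧ ξ = V.character

/-- The superclass `[g]` of `g`, for the equivalence relation `R` whose classes are the
superclasses. -/
def superclass {G : Type} [Fintype G] (R : Setoid G) (g : G) : Finset G :=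
  Finset.univ.filter fun k => R.r g k

/-- Superinduction of a function `φ : H → ℂ` to `G`:
`SInd_H^G(φ)(g) = (|G|/(|H|·|[g]|)) · Σ_{k∈[g]} φ⁰(k)`, where `φ⁰` extends `φ` by `0`. -/
def SInd (G : Type) [Group G] [Fintype G] (H : Subgroup G) (R : Setoid G)
    (φ : H → ℂ) : G → ℂ := fun g =>
  (Fintype.card G : ℂ) / ((Fintype.card H : ℂ) * ((superclass R g).card : ℂ)) *
    ∑ k ∈ superclass R g, (if hk : k ∈ H then φ ⟨k, hk⟩ else 0)

/-- Superinduction satisfies Frobenius reciprocity: if `H ≤ G` are finite groups, `G` carries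
a supercharacter theory (with superclasses the classes of `R` and supercharacters `X`),
`φ : H → ℂ` is any function and `ψ : G → ℂ` is a superclass function, then
`⟨SInd_H^G(φ), ψ⟩ = ⟨φ, Res_H^G(ψ)⟩`. -/
theorem stmt6 (G : Type) [Group G] [Fintype G] (R : Setoid G) (X : Finset (G → ℂ))
    (c : (G → ℂ) → ℂ)
    (hchar : ∀ χ ∈ X, IsChar G χ)
    (hnz : ∀ χ ∈ X, χ ≠ 0)
    (horth : ∀ χ₁ ∈ X, ∀ χ₂ ∈ X, χ₁ ≠ χ₂ → innerChar G χ₁ χ₂ = 0)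
    (hcardeq : X.card = (Finset.univ.image fun g : G => superclass R g).card)
    (hconstant : ∀ χ ∈ X, ∀ g h : G, R.r g h → χ g = χ h)
    (hconstituent : ∀ ξ : G → ℂ, IsIrredChar G ξ → ∃! χ, χ ∈ X ∧ innerChar G χ ξ ≠ 0)
    (H : Subgroup G) (φ : H → ℂ) (ψ : G → ℂ)
    (hψ : ∀ g k : G, R.r g k → ψ g = ψ k) :
    innerChar G (SInd G H R φ) ψ = innerChar H φ (fun h => ψ h) := by
  classical
  have hG : (Fintype.card G : ℂ) ≠ 0 := Nat.cast_ne_zero.mpr Fintype.card_ne_zero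
  have hH : (Fintype.card H : ℂ) ≠ 0 := Nat.cast_ne_zero.mpr Fintype.card_ne_zero
  have hmem : ∀ g k : G, k ∈ superclass R g ↔ R.r g k := by
    intro g k; simp [superclass]
  have hcardpos : ∀ g : G, ((superclass R g).card : ℂ) ≠ 0 := by
    intro g
    have hg : g ∈ superclass R g := (hmem g g).2 (R.refl g)
    exact Nat.cast_ne_zero.mpr (Finset.card_ne_zero_of_mem hg)
  have hclass_eq : ∀ g k : G, R.r g k → superclass R g = superclass R k := by
    intro g k hgk
    ext x
    simp only [hmem]
    exact ⟨fun h => R.trans (R.symm hgk) h, fun h => R.trans hgk h⟩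
  set f : G → ℂ := fun k =>
    (if hk : k ∈ H then φ ⟨k, hk⟩ else 0) * (starRingEnd ℂ) (ψ k) with hf
  -- Step 1: rewrite each summand
  have step1 : ∀ g : G,
      SInd G H R φ g * (starRingEnd ℂ) (ψ g)
        = (Fintype.card G : ℂ) / (Fintype.card H : ℂ) *
            (((superclass R g).card : ℂ)⁻¹ * ∑ k ∈ superclass R g, f k) := by
    intro g
    have : ∑ k ∈ superclass R g, f k
        = (∑ k ∈ superclass R g, (if hk : k ∈ H then φ ⟨k, hk⟩ else 0)) *
            (starRingEnd ℂ) (ψ g) := by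
      rw [Finset.sum_mul]
      refine Finset.sum_congr rfl fun k hk => ?_
      have : ψ g = ψ k := hψ g k ((hmem g k).1 hk)
      rw [hf]; simp only [this]
    rw [this, SInd]
    field_simp
  have step2 : (∑ g : G, ((superclass R g).card : ℂ)⁻¹ * ∑ k ∈ superclass R g, f k)
      = ∑ k : G, f k := by
    have : ∀ g : G, ((superclass R g).card : ℂ)⁻¹ * ∑ k ∈ superclass R g, f k
        = ∑ k : G, if R.r g k then ((superclass R k).card : ℂ)⁻¹ * f k else 0 := by
      intro g
      rw [Finset.mul_sum]
      rw [← Finset.sum_filter]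
      refine Finset.sum_congr rfl fun k hk => ?_
      have hk' : R.r g k := by simpa using hk
      rw [hclass_eq g k hk']
    rw [Finset.sum_congr rfl fun g _ => this g, Finset.sum_comm]
    refine Finset.sum_congr rfl fun k _ => ?_
    have hcount : (Finset.univ.filter fun g : G => R.r g k) = superclass R k := by
      ext g
      simp only [Finset.mem_filter, Finset.mem_univ, true_and, hmem]
      exact ⟨fun h => R.symm h, fun h => R.symm h⟩
    rw [← Finset.sum_filter, Finset.sum_const, hcount, nsmul_eq_mul]
    rw [mul_comm, mul_assoc, mul_comm (f k), ← mul_assoc, inv_mul_cancel₀ (hcardpos k),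
      one_mul]
  have step3 : (∑ k : G, f k) = ∑ h : H, φ h * (starRingEnd ℂ) (ψ h) := by
    have h1 : (∑ k : G, f k) = ∑ k ∈ Finset.univ.filter (fun k : G => k ∈ H), f k := by
      symm
      apply Finset.sum_filter_of_ne
      intro x _ hx
      by_contra hxH
      exact hx (by rw [hf]; simp [hxH])
    rw [h1, ← Finset.sum_subtype_eq_sum_filter]
    have huniv : (Finset.univ.subtype fun k : G => k ∈ H) = Finset.univ := by
      ext x; simp
    rw [huniv]
    refine Finset.sum_congr rfl fun h _ => ?_
    rw [hf]
    simp
  unfold innerChar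
  rw [Finset.sum_congr rfl fun g _ => step1 g, ← Finset.mul_sum, step2, step3, ← mul_assoc]
  congr 1
  field_simp

end
end

section
/- Let λ ⊢ n and σ ∈ S_r with r ≤ n. In Young's orthogonal representation, the entry π^λ(σ)_{T,T'} vanishes whenever the skew parts of T and T' (the standard skew tableaux formed by entries > r) differ, and equals π^ν(σ)_{U,U'} when they coincide, where ν ⊢ r is the common shape of the restrictions U, U' of T, T' to entries ≤ r. -/
open scoped Classical

noncomputable section

/-- A standard Young tableau of shape `μ ⊢ n`: a listing of the cells of `μ`
(`pos i` is the cell containing the entry `i+1`) increasing along rows and columns. -/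
structure SYT (μ : YoungDiagram) where
  pos : Fin μ.card → ℕ × ℕ
  inj : Function.Injective pos
  range_eq : ∀ c : ℕ × ℕ, (∃ i, pos i = c) ↔ c ∈ μ
  row_lt : ∀ a b, (pos a).1 = (pos b).1 → (pos a).2 < (pos b).2 → a < b
  col_lt : ∀ a b, (pos a).2 = (pos b).2 → (pos a).1 < (pos b).1 → a < b

/-- The content of a box `(i, j)` (row `i`, column `j`) is `j − i`. -/
def content (c : ℕ × ℕ) : ℝ := (c.2 : ℝ) - (c.1 : ℝ)

/-- `ρ` is Young's orthogonal representation of `S_{|μ|}` for the shape `μ`, given entrywise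
on the basis of standard Young tableaux: it is multiplicative, sends `1` to the identity
matrix, and on an adjacent transposition `(k, k+1)` (labels `a+1, b+1` with `b = a+1`) the
`(T, S)` entry is `1/d_k(T)` if `S = T`, `√(1 − 1/d_k(T)²)` if `S = (k, k+1)T`, and `0`
otherwise, where `d_k(T)` is the signed content distance between `k` and `k+1` in `T`. -/
def IsYoungOrthogonal (μ : YoungDiagram)
    (ρ : Equiv.Perm (Fin μ.card) → SYT μ → SYT μ → ℝ) : Prop :=
  (∀ T S : SYT μ, ρ 1 T S = if T = S then 1 else 0) ∧
  (∀ σ τ : Equiv.Perm (Fin μ.card), ∀ T S : SYT μ,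
    ρ (σ * τ) T S = ∑ᶠ U : SYT μ, ρ σ T U * ρ τ U S) ∧
  (∀ a b : Fin μ.card, (b : ℕ) = (a : ℕ) + 1 → ∀ T S : SYT μ,
    ρ (Equiv.swap a b) T S =
      if S = T then 1 / (content (T.pos a) - content (T.pos b))
      else if S.pos = T.pos ∘ (Equiv.swap a b) then
        Real.sqrt (1 - 1 / (content (T.pos a) - content (T.pos b)) ^ 2)
      else 0)

/-! ### Auxiliary lemmas -/

theorem SYT.ext' {μ : YoungDiagram} {T S : SYT μ} (h : T.pos = S.pos) : T = S := by
  cases T; cases S; simp_all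

instance (μ : YoungDiagram) : Finite (SYT μ) := by
  apply Finite.of_injective
    (fun T : SYT μ => (fun i => (⟨T.pos i, by
      rw [YoungDiagram.mem_cells]; exact (T.range_eq _).1 ⟨i, rfl⟩⟩ : μ.cells))
      : SYT μ → (Fin μ.card → μ.cells))
  intro T S h
  exact SYT.ext' (funext fun i => congrArg Subtype.val (congrFun h i))

theorem permCongr_one {α β : Type*} (e : α ≃ β) :
    e.permCongr (1 : Equiv.Perm α) = 1 := by
  ext x; simp

theorem permCongr_mul {α β : Type*} (e : α ≃ β) (σ τ : Equiv.Perm α) :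
    e.permCongr (σ * τ) = e.permCongr σ * e.permCongr τ := by
  ext x; simp [Equiv.permCongr_apply, Equiv.Perm.mul_apply]

theorem permCongr_swap {α β : Type*} [DecidableEq α] [DecidableEq β] (e : α ≃ β) (a b : α) :
    e.permCongr (Equiv.swap a b) = Equiv.swap (e a) (e b) := by
  ext x
  rw [Equiv.permCongr_apply]
  have := e.injective.swap_apply a b (e.symm x)
  rw [e.apply_symm_apply] at this
  exact this.symm

theorem viaEmbedding_one {α β : Type*} (ι : α ↪ β) :
    (1 : Equiv.Perm α).viaEmbedding ι = 1 := by
  rw [← Equiv.Perm.viaEmbeddingHom_apply, map_one]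

theorem viaEmbedding_mul {α β : Type*} (ι : α ↪ β) (σ τ : Equiv.Perm α) :
    (σ * τ).viaEmbedding ι = σ.viaEmbedding ι * τ.viaEmbedding ι := by
  rw [← Equiv.Perm.viaEmbeddingHom_apply, map_mul,
    Equiv.Perm.viaEmbeddingHom_apply, Equiv.Perm.viaEmbeddingHom_apply]

theorem viaEmbedding_swap {α β : Type*} [DecidableEq α] [DecidableEq β]
    (ι : α ↪ β) (a b : α) :
    (Equiv.swap a b).viaEmbedding ι = Equiv.swap (ι a) (ι b) := by
  ext x
  by_cases hx : x ∈ Set.range ι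
  · obtain ⟨y, rfl⟩ := hx
    rw [Equiv.Perm.viaEmbedding_apply, ← ι.injective.swap_apply]
  · rw [Equiv.Perm.viaEmbedding_apply_of_notMem _ _ _ hx,
      Equiv.swap_apply_of_ne_of_ne (fun hh => hx ⟨a, hh.symm⟩) (fun hh => hx ⟨b, hh.symm⟩)]

theorem closure_adjacent (r : ℕ) :
    Submonoid.closure {π : Equiv.Perm (Fin r) |
      ∃ a b : Fin r, (b : ℕ) = (a : ℕ) + 1 ∧ π = Equiv.swap a b} = ⊤ := by
  cases r with
  | zero =>
      apply top_unique
      intro x _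
      have : x = 1 := Subsingleton.elim _ _
      rw [this]; exact one_mem _
  | succ s =>
      apply top_unique
      rw [← Equiv.Perm.mclosure_swap_castSucc_succ s]
      apply Submonoid.closure_le.mpr
      rintro _ ⟨i, rfl⟩
      exact Submonoid.subset_closure ⟨i.castSucc, i.succ, by simp, rfl⟩

section Combinatorics

variable {lam ν : YoungDiagram} {r : ℕ}

/-- The inclusion of indices `Fin ν.card → Fin lam.card` when `ν.card = r ≤ lam.card`. -/
def phi (h : r ≤ lam.card) (hνr : ν.card = r) (j : Fin ν.card) : Fin lam.card :=
  Fin.castLE h (Fin.cast hνr j)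

@[simp] theorem phi_val (h : r ≤ lam.card) (hνr : ν.card = r) (j : Fin ν.card) :
    ((phi h hνr j : Fin lam.card) : ℕ) = (j : ℕ) := rfl

theorem phi_inj (h : r ≤ lam.card) (hνr : ν.card = r) :
    Function.Injective (phi h hνr) := fun x y hxy => by
  have h2 := congrArg Fin.val hxy
  exact Fin.ext h2

theorem phi_lt (h : r ≤ lam.card) (hνr : ν.card = r) (j : Fin ν.card) :
    ((phi h hνr j : Fin lam.card) : ℕ) < r := by
  rw [phi_val]; have := j.isLt; omega

/-- A cell lies in `ν` iff it is a cell of `T` with index `< r`. -/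
theorem mem_lowcell_iff (h : r ≤ lam.card) (hνr : ν.card = r) (T : SYT lam) (U : SYT ν)
    (hU : ∀ j, U.pos j = T.pos (phi h hνr j)) (c : ℕ × ℕ) :
    c ∈ ν ↔ ∃ i : Fin lam.card, (i : ℕ) < r ∧ T.pos i = c := by
  constructor
  · intro hc
    obtain ⟨j, hj⟩ := (U.range_eq c).2 hc
    exact ⟨phi h hνr j, phi_lt h hνr j, by rw [← hU j, hj]⟩
  · rintro ⟨i, hir, rfl⟩
    apply (U.range_eq _).1
    refine ⟨⟨(i : ℕ), by omega⟩, (hU _).trans (congrArg T.pos (Fin.ext rfl))⟩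

/-- Restricting a tableau `V` of shape `lam` that agrees with `T` above `r` to the
shape `ν` of the first `r` entries of `T`. -/
def restrictSYT (h : r ≤ lam.card) (hνr : ν.card = r) (T : SYT lam) (U : SYT ν) (V : SYT lam)
    (hU : ∀ j, U.pos j = T.pos (phi h hνr j))
    (hV : ∀ i : Fin lam.card, r ≤ (i : ℕ) → V.pos i = T.pos i) : SYT ν where
  pos := fun j => V.pos (phi h hνr j)
  inj := fun x y hxy => phi_inj h hνr (V.inj hxy)
  range_eq := by
    intro c
    constructor
    · rintro ⟨j, rfl⟩
      have hmem : V.pos (phi h hνr j) ∈ lam := (V.range_eq _).1 ⟨_, rfl⟩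
      obtain ⟨i, hi⟩ := (T.range_eq _).2 hmem
      by_cases hir : r ≤ (i : ℕ)
      · exfalso
        have h2 : V.pos i = V.pos (phi h hνr j) := by rw [hV i hir, hi]
        have h3 := V.inj h2
        have := phi_lt h hνr j
        have := congrArg Fin.val h3
        omega
      · rw [mem_lowcell_iff h hνr T U hU]
        exact ⟨i, by omega, hi⟩
    · intro hc
      obtain ⟨j, hj⟩ := (U.range_eq c).2 hc
      have hT : T.pos (phi h hνr j) = c := by rw [← hU j, hj]
      have hclam : c ∈ lam := (T.range_eq c).1 ⟨_, hT⟩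
      obtain ⟨i, hi⟩ := (V.range_eq c).2 hclam
      by_cases hir : r ≤ (i : ℕ)
      · exfalso
        have h2 : T.pos i = T.pos (phi h hνr j) := by rw [← hV i hir, hi, hT]
        have h3 := T.inj h2
        have := phi_lt h hνr j
        have := congrArg Fin.val h3
        omega
      · refine ⟨⟨(i : ℕ), by omega⟩, ?_⟩
        show V.pos (phi h hνr ⟨(i : ℕ), by omega⟩) = c
        rw [show phi h hνr ⟨(i : ℕ), by omega⟩ = i from Fin.ext rfl, hi]
  row_lt := by
    intro a b h1 h2
    exact Fin.lt_def.mpr (Fin.lt_def.mp (V.row_lt _ _ h1 h2))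
  col_lt := by
    intro a b h1 h2
    exact Fin.lt_def.mpr (Fin.lt_def.mp (V.col_lt _ _ h1 h2))

@[simp] theorem restrictSYT_pos (h : r ≤ lam.card) (hνr : ν.card = r) (T : SYT lam)
    (U : SYT ν) (V : SYT lam) (hU) (hV) (j : Fin ν.card) :
    (restrictSYT h hνr T U V hU hV).pos j = V.pos (phi h hνr j) := rfl

/-- Extending a tableau `W` of shape `ν` by the entries of `T` above `r`. -/
def extendSYT (h : r ≤ lam.card) (hνr : ν.card = r) (T : SYT lam) (U W : SYT ν)
    (hU : ∀ j, U.pos j = T.pos (phi h hνr j)) : SYT lam where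
  pos := fun i => if hi : (i : ℕ) < r then W.pos ⟨(i : ℕ), by omega⟩ else T.pos i
  inj := by
    intro x y hxy
    dsimp only at hxy
    by_cases hx : (x : ℕ) < r <;> by_cases hy : (y : ℕ) < r
    · rw [dif_pos hx, dif_pos hy] at hxy
      have := congrArg Fin.val (W.inj hxy)
      exact Fin.ext this
    · exfalso
      rw [dif_pos hx, dif_neg hy] at hxy
      have hmem : W.pos ⟨(x : ℕ), by omega⟩ ∈ ν := (W.range_eq _).1 ⟨_, rfl⟩
      obtain ⟨i, hir, hi⟩ := (mem_lowcell_iff h hνr T U hU _).1 hmem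
      rw [hxy] at hi
      have := congrArg Fin.val (T.inj hi)
      omega
    · exfalso
      rw [dif_neg hx, dif_pos hy] at hxy
      have hmem : W.pos ⟨(y : ℕ), by omega⟩ ∈ ν := (W.range_eq _).1 ⟨_, rfl⟩
      obtain ⟨i, hir, hi⟩ := (mem_lowcell_iff h hνr T U hU _).1 hmem
      rw [← hxy] at hi
      have := congrArg Fin.val (T.inj hi)
      omega
    · rw [dif_neg hx, dif_neg hy] at hxy
      exact T.inj hxy
  range_eq := by
    intro c
    constructor
    · rintro ⟨i, rfl⟩
      by_cases hi : (i : ℕ) < r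
      · rw [dif_pos hi]
        have hmem : W.pos ⟨(i : ℕ), by omega⟩ ∈ ν := (W.range_eq _).1 ⟨_, rfl⟩
        obtain ⟨i₁, _, hi₁⟩ := (mem_lowcell_iff h hνr T U hU _).1 hmem
        rw [← hi₁]
        exact (T.range_eq _).1 ⟨i₁, rfl⟩
      · rw [dif_neg hi]
        exact (T.range_eq _).1 ⟨i, rfl⟩
    · intro hc
      obtain ⟨i, hi⟩ := (T.range_eq c).2 hc
      by_cases hir : (i : ℕ) < r
      · have hcν : c ∈ ν := (mem_lowcell_iff h hνr T U hU c).2 ⟨i, hir, hi⟩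
        obtain ⟨j, hj⟩ := (W.range_eq c).2 hcν
        refine ⟨phi h hνr j, ?_⟩
        rw [dif_pos (phi_lt h hνr j), ← hj]
        exact congrArg W.pos (Fin.ext rfl)
      · exact ⟨i, by rw [dif_neg hir]; exact hi⟩
  row_lt := by
    intro a b h1 h2
    by_cases ha : (a : ℕ) < r <;> by_cases hb : (b : ℕ) < r
    · rw [dif_pos ha, dif_pos hb] at h1 h2
      exact Fin.lt_def.mpr (Fin.lt_def.mp (W.row_lt _ _ h1 h2))
    · exact Fin.lt_def.mpr (by omega)
    · exfalso
      rw [dif_neg ha, dif_pos hb] at h1 h2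
      have hmem : W.pos ⟨(b : ℕ), by omega⟩ ∈ ν := (W.range_eq _).1 ⟨_, rfl⟩
      obtain ⟨i₁, hi₁r, hi₁⟩ := (mem_lowcell_iff h hνr T U hU _).1 hmem
      rw [← hi₁] at h1 h2
      have := Fin.lt_def.mp (T.row_lt a i₁ h1 h2)
      omega
    · rw [dif_neg ha, dif_neg hb] at h1 h2
      exact T.row_lt _ _ h1 h2
  col_lt := by
    intro a b h1 h2
    by_cases ha : (a : ℕ) < r <;> by_cases hb : (b : ℕ) < r
    · rw [dif_pos ha, dif_pos hb] at h1 h2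
      exact Fin.lt_def.mpr (Fin.lt_def.mp (W.col_lt _ _ h1 h2))
    · exact Fin.lt_def.mpr (by omega)
    · exfalso
      rw [dif_neg ha, dif_pos hb] at h1 h2
      have hmem : W.pos ⟨(b : ℕ), by omega⟩ ∈ ν := (W.range_eq _).1 ⟨_, rfl⟩
      obtain ⟨i₁, hi₁r, hi₁⟩ := (mem_lowcell_iff h hνr T U hU _).1 hmem
      rw [← hi₁] at h1 h2
      have := Fin.lt_def.mp (T.col_lt a i₁ h1 h2)
      omega
    · rw [dif_neg ha, dif_neg hb] at h1 h2
      exact T.col_lt _ _ h1 h2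

theorem extendSYT_pos_low (h : r ≤ lam.card) (hνr : ν.card = r) (T : SYT lam) (U W : SYT ν)
    (hU : ∀ j, U.pos j = T.pos (phi h hνr j)) (j : Fin ν.card) :
    (extendSYT h hνr T U W hU).pos (phi h hνr j) = W.pos j := by
  show (if hi : ((phi h hνr j : Fin lam.card) : ℕ) < r then _ else _) = _
  rw [dif_pos (phi_lt h hνr j)]
  exact congrArg W.pos (Fin.ext rfl)

theorem extendSYT_pos_high (h : r ≤ lam.card) (hνr : ν.card = r) (T : SYT lam) (U W : SYT ν)
    (hU : ∀ j, U.pos j = T.pos (phi h hνr j)) (i : Fin lam.card) (hi : r ≤ (i : ℕ)) :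
    (extendSYT h hνr T U W hU).pos i = T.pos i := by
  show (if h' : ((i : Fin lam.card) : ℕ) < r then _ else _) = _
  rw [dif_neg (by omega)]

/-- Two tableaux agreeing above `r` are equal iff their restrictions are equal. -/
theorem eq_iff_restrict_eq (h : r ≤ lam.card) (hνr : ν.card = r) (T T' : SYT lam)
    (U U' : SYT ν)
    (hskew : ∀ i : Fin lam.card, r ≤ (i : ℕ) → T.pos i = T'.pos i)
    (hU : ∀ j, U.pos j = T.pos (phi h hνr j))
    (hU' : ∀ j, U'.pos j = T'.pos (phi h hνr j)) :
    T = T' ↔ U = U' := by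
  constructor
  · intro hTT
    apply SYT.ext'
    funext j
    rw [hU j, hU' j, hTT]
  · intro hUU
    apply SYT.ext'
    funext i
    by_cases hi : (i : ℕ) < r
    · have hrw : i = phi h hνr ⟨(i : ℕ), by omega⟩ := Fin.ext rfl
      rw [hrw, ← hU, ← hU', hUU]
    · exact hskew i (by omega)

end Combinatorics

/-- Let `λ ⊢ n` and `σ ∈ S_r` with `r ≤ n`.  In Young's orthogonal representation, the entry
`π^λ(σ)_{T,T'}` vanishes whenever the skew parts of `T` and `T'` (the standard skew tableaux
formed by the entries `> r`) differ, and equals `π^ν(σ)_{U,U'}` when they coincide, where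
`ν ⊢ r` is the common shape of the restrictions `U, U'` of `T, T'` to entries `≤ r`. -/
theorem stmt9 (ρ : (μ : YoungDiagram) → Equiv.Perm (Fin μ.card) → SYT μ → SYT μ → ℝ)
    (hρ : ∀ μ : YoungDiagram, IsYoungOrthogonal μ (ρ μ))
    (lam : YoungDiagram) (n r : ℕ) (hn : lam.card = n) (hrn : r ≤ n)
    (σ : Equiv.Perm (Fin r)) (T T' : SYT lam) :
    ((∃ i : Fin lam.card, r ≤ (i : ℕ) ∧ T.pos i ≠ T'.pos i) →
      ρ lam (σ.viaEmbedding (Fin.castLEEmb (show r ≤ lam.card by omega))) T T' = 0) ∧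
    ((∀ i : Fin lam.card, r ≤ (i : ℕ) → T.pos i = T'.pos i) →
      ∀ (ν : YoungDiagram) (hνr : ν.card = r) (U U' : SYT ν),
        (∀ j : Fin ν.card,
          U.pos j = T.pos (Fin.castLE (show r ≤ lam.card by omega) (Fin.cast hνr j))) →
        (∀ j : Fin ν.card,
          U'.pos j = T'.pos (Fin.castLE (show r ≤ lam.card by omega) (Fin.cast hνr j))) →
        ρ lam (σ.viaEmbedding (Fin.castLEEmb (show r ≤ lam.card by omega))) T T' =
          ρ ν ((finCongr hνr.symm).permCongr σ) U U') := by
  have h : r ≤ lam.card := by omega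
  set ι : Fin r ↪ Fin lam.card := Fin.castLEEmb (show r ≤ lam.card by omega) with hι
  suffices H : ∀ π : Equiv.Perm (Fin r), ∀ T T' : SYT lam,
      ((∃ i : Fin lam.card, r ≤ (i : ℕ) ∧ T.pos i ≠ T'.pos i) →
        ρ lam (π.viaEmbedding ι) T T' = 0) ∧
      ((∀ i : Fin lam.card, r ≤ (i : ℕ) → T.pos i = T'.pos i) →
        ∀ (ν : YoungDiagram) (hνr : ν.card = r) (U U' : SYT ν),
          (∀ j : Fin ν.card, U.pos j = T.pos (phi h hνr j)) →
          (∀ j : Fin ν.card, U'.pos j = T'.pos (phi h hνr j)) →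
          ρ lam (π.viaEmbedding ι) T T' = ρ ν ((finCongr hνr.symm).permCongr π) U U') by
    exact H σ T T'
  have hmem : ∀ π : Equiv.Perm (Fin r), π ∈ Submonoid.closure {π : Equiv.Perm (Fin r) |
      ∃ a b : Fin r, (b : ℕ) = (a : ℕ) + 1 ∧ π = Equiv.swap a b} := by
    rw [closure_adjacent]; exact fun _ => trivial
  intro π
  induction hmem π using Submonoid.closure_induction with
  | mem π hπ =>
      obtain ⟨a, b, hab, rfl⟩ := hπ
      intro T T'
      have hswap : (Equiv.swap a b).viaEmbedding ι = Equiv.swap (ι a) (ι b) :=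
        viaEmbedding_swap ι a b
      have hab' : ((ι b : Fin lam.card) : ℕ) = ((ι a : Fin lam.card) : ℕ) + 1 := by
        simpa [hι] using hab
      have hval_a : ((ι a : Fin lam.card) : ℕ) = (a : ℕ) := by simp [hι]
      have hval_b : ((ι b : Fin lam.card) : ℕ) = (b : ℕ) := by simp [hι]
      have hformula := (hρ lam).2.2 (ι a) (ι b) hab' T T'
      rw [hswap]
      constructor
      · rintro ⟨i, hir, hne⟩
        rw [hformula, if_neg, if_neg]
        · intro hcon
          apply hne
          have hia : i ≠ ι a := by
            intro hcon2; have := congrArg Fin.val hcon2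
            have := a.isLt; omega
          have hib : i ≠ ι b := by
            intro hcon2; have := congrArg Fin.val hcon2
            have := b.isLt; omega
          have := congrFun hcon i
          rw [Function.comp_apply, Equiv.swap_apply_of_ne_of_ne hia hib] at this
          exact this.symm
        · intro hcon; exact hne (by rw [hcon])
      · intro hskew ν hνr U U' hU hU'
        -- translate everything to the ν-side
        have e : Fin r ≃ Fin ν.card := finCongr hνr.symm
        rw [permCongr_swap]
        set a' : Fin ν.card := (finCongr hνr.symm) a with ha'
        set b' : Fin ν.card := (finCongr hνr.symm) b with hb'
        have hva' : (a' : ℕ) = (a : ℕ) := by simp [ha']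
        have hvb' : (b' : ℕ) = (b : ℕ) := by simp [hb']
        have hab'' : (b' : ℕ) = (a' : ℕ) + 1 := by omega
        have hformula' := (hρ ν).2.2 a' b' hab'' U U'
        rw [hformula, hformula']
        -- identifications of indices
        have hphia : phi h hνr a' = ι a := Fin.ext (by simp [hι, hva'])
        have hphib : phi h hνr b' = ι b := Fin.ext (by simp [hι, hvb'])
        have hUa : U.pos a' = T.pos (ι a) := by rw [hU a', hphia]
        have hUb : U.pos b' = T.pos (ι b) := by rw [hU b', hphib]
        have hcond1 : (T' = T) ↔ (U' = U) :=
          eq_iff_restrict_eq h hνr T' T U' U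
            (fun i hi => (hskew i hi).symm) hU' hU
        have hswapcomm : ∀ x : Fin ν.card,
            phi h hνr (Equiv.swap a' b' x) = Equiv.swap (ι a) (ι b) (phi h hνr x) := by
          intro x
          rw [← hphia, ← hphib]
          exact ((phi_inj h hνr).swap_apply a' b' x).symm
        have hcond2 : (T'.pos = T.pos ∘ Equiv.swap (ι a) (ι b)) ↔
            (U'.pos = U.pos ∘ Equiv.swap a' b') := by
          constructor
          · intro hc
            funext j
            rw [hU' j, hc, Function.comp_apply, Function.comp_apply,
              ← hswapcomm j, ← hU]
          · intro hc
            funext i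
            by_cases hi : (i : ℕ) < r
            · have hrw : i = phi h hνr ⟨(i : ℕ), by omega⟩ := Fin.ext rfl
              rw [hrw, ← hU', congrFun hc, Function.comp_apply, Function.comp_apply,
                hU, hswapcomm]
            · have hia : i ≠ ι a := by
                intro hcon2; have := congrArg Fin.val hcon2
                have := a.isLt; omega
              have hib : i ≠ ι b := by
                intro hcon2; have := congrArg Fin.val hcon2
                have := b.isLt; omega
              rw [Function.comp_apply, Equiv.swap_apply_of_ne_of_ne hia hib]
              exact (hskew i (by omega)).symm
        by_cases h1 : T' = T
        · rw [if_pos h1, if_pos (hcond1.mp h1), hUa, hUb]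
        · rw [if_neg h1, if_neg (fun hc => h1 (hcond1.mpr hc))]
          by_cases h2 : T'.pos = T.pos ∘ Equiv.swap (ι a) (ι b)
          · rw [if_pos h2, if_pos (hcond2.mp h2), hUa, hUb]
          · rw [if_neg h2, if_neg (fun hc => h2 (hcond2.mpr hc))]
  | one =>
      intro T T'
      have h1 : (1 : Equiv.Perm (Fin r)).viaEmbedding ι = 1 := viaEmbedding_one ι
      rw [h1]
      constructor
      · rintro ⟨i, hir, hne⟩
        rw [(hρ lam).1, if_neg (fun hc => hne (by rw [hc]))]
      · intro hskew ν hνr U U' hU hU'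
        rw [permCongr_one, (hρ lam).1, (hρ ν).1]
        have := eq_iff_restrict_eq h hνr T T' U U' hskew hU hU'
        by_cases h1 : T = T'
        · rw [if_pos h1, if_pos (this.mp h1)]
        · rw [if_neg h1, if_neg (fun hc => h1 (this.mpr hc))]
  | mul π τ hπ hτ ihπ ihτ =>
      intro T T'
      letI : Fintype (SYT lam) := Fintype.ofFinite _
      have hvmul : (π * τ).viaEmbedding ι = π.viaEmbedding ι * τ.viaEmbedding ι :=
        viaEmbedding_mul ι π τ
      have hmul := (hρ lam).2.1 (π.viaEmbedding ι) (τ.viaEmbedding ι) T T'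
      rw [hvmul, hmul, finsum_eq_sum_of_fintype]
      constructor
      · rintro ⟨i, hir, hne⟩
        apply Finset.sum_eq_zero
        intro V _
        by_cases hc : ∀ i : Fin lam.card, r ≤ (i : ℕ) → T.pos i = V.pos i
        · have : ρ lam (τ.viaEmbedding ι) V T' = 0 := by
            apply (ihτ V T').1
            exact ⟨i, hir, fun hcon => hne ((hc i hir).trans hcon)⟩
          rw [this, mul_zero]
        · push_neg at hc
          obtain ⟨i₂, hi₂, hne₂⟩ := hc
          have : ρ lam (π.viaEmbedding ι) T V = 0 := (ihπ T V).1 ⟨i₂, hi₂, hne₂⟩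
          rw [this, zero_mul]
      · intro hskew ν hνr U U' hU hU'
        letI : Fintype (SYT ν) := Fintype.ofFinite _
        have hmulν := (hρ ν).2.1 ((finCongr hνr.symm).permCongr π)
          ((finCongr hνr.symm).permCongr τ) U U'
        rw [permCongr_mul, hmulν, finsum_eq_sum_of_fintype]
        -- restrict the sum to tableaux matching `T` above `r`
        rw [← Finset.sum_filter_of_ne (p := fun V : SYT lam =>
          ∀ i : Fin lam.card, r ≤ (i : ℕ) → T.pos i = V.pos i)
          (by
            intro V _ hne
            by_contra hc
            push_neg at hc
            obtain ⟨i₂, hi₂, hne₂⟩ := hc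
            exact hne (by rw [(ihπ T V).1 ⟨i₂, hi₂, hne₂⟩, zero_mul]))]
        refine Finset.sum_bij'
          (i := fun V hV => restrictSYT h hνr T U V hU
            (fun i hi => ((Finset.mem_filter.mp hV).2 i hi).symm))
          (j := fun W _ => extendSYT h hνr T U W hU) ?_ ?_ ?_ ?_ ?_
        · intro V hV; exact Finset.mem_univ _
        · intro W _
          rw [Finset.mem_filter]
          exact ⟨Finset.mem_univ _, fun i hi =>
            (extendSYT_pos_high h hνr T U W hU i hi).symm⟩
        · intro V hV
          apply SYT.ext'
          funext i
          by_cases hi : (i : ℕ) < r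
          · have hrw : i = phi h hνr ⟨(i : ℕ), by omega⟩ := Fin.ext rfl
            rw [hrw, extendSYT_pos_low]
            rfl
          · rw [extendSYT_pos_high h hνr T U _ hU i (by omega)]
            exact ((Finset.mem_filter.mp hV).2 i (by omega))
        · intro W _
          apply SYT.ext'
          funext j
          rw [restrictSYT_pos, extendSYT_pos_low]
        · intro V hV
          have hVc : ∀ i : Fin lam.card, r ≤ (i : ℕ) → V.pos i = T.pos i :=
            fun i hi => ((Finset.mem_filter.mp hV).2 i hi).symm
          have hres : ∀ j, (restrictSYT h hνr T U V hU
              (fun i hi => ((Finset.mem_filter.mp hV).2 i hi).symm)).pos j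
              = V.pos (phi h hνr j) :=
            fun j => rfl
          have h1 : ρ lam (π.viaEmbedding ι) T V =
              ρ ν ((finCongr hνr.symm).permCongr π) U (restrictSYT h hνr T U V hU
                (fun i hi => ((Finset.mem_filter.mp hV).2 i hi).symm)) :=
            (ihπ T V).2 (fun i hi => (Finset.mem_filter.mp hV).2 i hi) ν hνr U _ hU hres
          have h2 : ρ lam (τ.viaEmbedding ι) V T' =
              ρ ν ((finCongr hνr.symm).permCongr τ) (restrictSYT h hνr T U V hU
                (fun i hi => ((Finset.mem_filter.mp hV).2 i hi).symm)) U' :=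
            (ihτ V T').2
              (fun i hi => (hVc i hi).trans (hskew i hi)) ν hνr _ U' hres hU'
          rw [h1, h2]

end
end

section
/- In the algebra ℂ[S_n], the sum over all sequences ((j_1,h),...,(j_k,h)) with k even, 1 ≤ j_1,...,j_k < h, such that the product (j_1,h)···(j_k,h) is the identity and |{j_1,...,j_k,h}| = k/2+1, for a fixed (k/2+1)-element support set D with maximum h, has cardinality Cat(k/2)·(k/2)!, where Cat denotes the Catalan numbers. -/
namespace Star14
open List

def pr (h : ℕ) (l : List ℕ) : Equiv.Perm ℕ := (l.map fun a => Equiv.swap a h).prod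

@[simp] lemma pr_nil (h : ℕ) : pr h [] = 1 := rfl

@[simp] lemma pr_cons (h a : ℕ) (l : List ℕ) :
    pr h (a :: l) = Equiv.swap a h * pr h l := by simp [pr]

lemma pr_append (h : ℕ) (l₁ l₂ : List ℕ) : pr h (l₁ ++ l₂) = pr h l₁ * pr h l₂ := by
  simp [pr]

lemma pr_fix {h a : ℕ} {l : List ℕ} (ha : a ∉ l) (hah : a ≠ h) : pr h l a = a := by
  induction l with
  | nil => rfl
  | cons x l ih =>
    simp only [mem_cons, not_or] at ha
    simp [Equiv.Perm.mul_apply, ih ha.2, Equiv.swap_apply_of_ne_of_ne ha.1 hah]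

/-- if a value occurs exactly once, the product is not the identity -/
lemma pr_ne_one_of_count_one {h x : ℕ} {l : List ℕ} (hh : h ∉ l) (hx : x ∈ l)
    (hc : l.count x = 1) : pr h l ≠ 1 := by
  intro h1
  obtain ⟨u, v, rfl⟩ := List.append_of_mem hx
  have hxh : x ≠ h := fun e => hh (e ▸ hx)
  have hcu : x ∉ u ∧ x ∉ v := by
    rw [List.count_append, List.count_cons_self] at hc
    have hu : u.count x = 0 := by omega
    have hv : v.count x = 0 := by omega
    exact ⟨List.count_eq_zero.mp hu, List.count_eq_zero.mp hv⟩
  have h2 : pr h (u ++ x :: v) x = pr h u h := by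
    rw [pr_append, pr_cons]
    simp only [Equiv.Perm.mul_apply]
    rw [pr_fix hcu.2 hxh, Equiv.swap_apply_left]
  rw [h1] at h2
  have h3 : pr h u x = x := pr_fix hcu.1 hxh
  have : (x : ℕ) = h := by
    apply (pr h u).injective
    rw [h3, ← h2]; rfl
  exact hxh this

end Star14
namespace Star14
open List

/-- stack machine runs: `SW s w` means starting with stack `s` (head = top),
consuming word `w`, ending with empty stack, where each letter either pushes a
value not on the stack, or pops the top of the stack provided that value never
occurs again. -/
inductive SW : List ℕ → List ℕ → Prop
  | nil : SW [] []
  | push {a : ℕ} {s w : List ℕ} : SW (a :: s) w → a ∉ s → SW s (a :: w)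
  | pop {a : ℕ} {s w : List ℕ} : SW s w → a ∉ w → a ∉ s → SW (a :: s) (a :: w)

lemma SW.count {s w : List ℕ} (hsw : SW s w) :
    (∀ b ∈ s, w.count b = 1) ∧ (∀ x : ℕ, x ∉ s → w.count x = 0 ∨ w.count x = 2) := by
  induction hsw with
  | nil => exact ⟨by simp, by simp⟩
  | push hg ha ih =>
    rename_i a s w
    constructor
    · intro b hb
      have hba : b ≠ a := fun e => ha (e ▸ hb)
      rw [List.count_cons_of_ne (Ne.symm hba)]
      exact ih.1 b (List.mem_cons_of_mem _ hb)
    · intro x hx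
      by_cases hxa : x = a
      · subst hxa
        right
        rw [List.count_cons_self]
        rw [ih.1 x (List.mem_cons_self)]
      · rw [List.count_cons_of_ne (Ne.symm hxa)]
        exact ih.2 x (by simp [hxa, hx])
  | pop hg haw has ih =>
    rename_i a s w
    constructor
    · intro b hb
      rcases List.mem_cons.mp hb with rfl | hb
      · rw [List.count_cons_self, List.count_eq_zero.mpr haw]
      · have hba : b ≠ a := fun e => has (e ▸ hb)
        rw [List.count_cons_of_ne (Ne.symm hba)]
        exact ih.1 b hb
    · intro x hx
      simp only [List.mem_cons, not_or] at hx
      rw [List.count_cons_of_ne (Ne.symm hx.1)]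
      exact ih.2 x hx.2

lemma SW.prod {s w : List ℕ} (hsw : SW s w) (h : ℕ) :
    pr h s.reverse * pr h w = 1 := by
  induction hsw with
  | nil => simp
  | push hg ha ih =>
    rename_i a s w
    rw [pr_cons, ← mul_assoc]
    have : pr h s.reverse * Equiv.swap a h = pr h ((a :: s).reverse) := by
      rw [List.reverse_cons, pr_append]
      simp [pr]
    rw [this]; exact ih
  | pop hg haw has ih =>
    rename_i a s w
    simp only [List.reverse_cons, pr_append, pr_cons, pr_nil, mul_one]
    rw [mul_assoc, ← mul_assoc (Equiv.swap a h), Equiv.swap_mul_self, one_mul]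
    exact ih

lemma SW.prod_eq_one {w : List ℕ} (hsw : SW [] w) (h : ℕ) : pr h w = 1 := by
  have := hsw.prod h
  simpa using this

lemma SW.mem_count {s w : List ℕ} (hsw : SW s w) {x : ℕ} (hx : x ∈ w) (hxs : x ∉ s) :
    w.count x = 2 := by
  rcases hsw.count.2 x hxs with h0 | h2
  · exact absurd (List.count_eq_zero.mp h0) (by simpa using hx)
  · exact h2

lemma SW.length_eq {w : List ℕ} (hsw : SW [] w) : w.length = 2 * w.toFinset.card := by
  have h2 : ∀ x ∈ w.toFinset, w.count x = 2 := by
    intro x hx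
    exact hsw.mem_count (List.mem_toFinset.mp hx) (by simp)
  calc w.length = ∑ x ∈ w.toFinset, w.count x := by
        simpa using (Multiset.toFinset_sum_count_eq (w : Multiset ℕ)).symm
    _ = ∑ _x ∈ w.toFinset, 2 := Finset.sum_congr rfl h2
    _ = 2 * w.toFinset.card := by rw [Finset.sum_const, smul_eq_mul, mul_comm]

/-- completeness: a word with identity product in which every letter occurs
exactly the right number of times is accepted by the machine. -/
lemma SW.complete (h : ℕ) : ∀ (w s : List ℕ), s.Nodup → h ∉ s → h ∉ w →
    pr h s.reverse * pr h w = 1 →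
    (∀ b ∈ s, w.count b = 1) → (∀ x ∈ w, x ∉ s → w.count x = 2) → SW s w := by
  intro w
  induction w with
  | nil =>
    intro s _ _ _ _ hc1 _
    cases s with
    | nil => exact SW.nil
    | cons c s => simpa using hc1 c (List.mem_cons_self)
  | cons a w ih =>
    intro s hnd hhs hhw hprod hc1 hc2
    have hha : a ≠ h := fun e => hhw (e ▸ List.mem_cons_self)
    by_cases has : a ∈ s
    · -- pop case
      have hca : (a :: w).count a = 1 := hc1 a has
      rw [List.count_cons_self] at hca
      have haw : a ∉ w := List.count_eq_zero.mp (by omega)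
      -- show a is the top of the stack
      obtain ⟨c, s₁, rfl⟩ : ∃ c s₁, s = c :: s₁ := by
        cases s with
        | nil => simp at has
        | cons c s₁ => exact ⟨c, s₁, rfl⟩
      have hch : c ≠ h := fun e => hhs (e ▸ List.mem_cons_self)
      have hfix : pr h w a = a := pr_fix haw hha
      have happ : (pr h ((c :: s₁).reverse) * pr h (a :: w)) a = a := by rw [hprod]; rfl
      have hhead : pr h ((c :: s₁).reverse) h = c := by
        rw [List.reverse_cons, pr_append]
        have : pr h [c] h = c := by simp [pr]
        simp only [Equiv.Perm.mul_apply, this]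
        exact pr_fix (by simpa using (List.nodup_cons.mp hnd).1) hch
      rw [pr_cons] at happ
      simp only [Equiv.Perm.mul_apply] at happ
      rw [hfix, Equiv.swap_apply_left, hhead] at happ
      -- so c = a
      subst happ
      have hprod' : pr h s₁.reverse * pr h w = 1 := by
        simp only [List.reverse_cons, pr_append, pr_cons, pr_nil, mul_one] at hprod
        rw [mul_assoc, ← mul_assoc (Equiv.swap c h), Equiv.swap_mul_self, one_mul] at hprod
        exact hprod
      have hnd1 := List.nodup_cons.mp hnd
      refine SW.pop (ih s₁ hnd1.2 (fun hm => hhs (List.mem_cons_of_mem _ hm))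
        (fun hm => hhw (List.mem_cons_of_mem _ hm)) hprod' ?_ ?_) haw hnd1.1
      · intro b hb
        have hba : b ≠ c := fun e => hnd1.1 (e ▸ hb)
        have := hc1 b (List.mem_cons_of_mem _ hb)
        rwa [List.count_cons_of_ne (Ne.symm hba)] at this
      · intro x hxw hxs
        have hxa : x ≠ c := fun e => haw (e ▸ hxw)
        have := hc2 x (List.mem_cons_of_mem _ hxw) (by simp [hxa, hxs])
        rwa [List.count_cons_of_ne (Ne.symm hxa)] at this
    · -- push case
      have hca : (a :: w).count a = 2 := hc2 a (List.mem_cons_self) has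
      rw [List.count_cons_self] at hca
      have hprod' : pr h ((a :: s).reverse) * pr h w = 1 := by
        rw [List.reverse_cons, pr_append]
        have : pr h [a] = Equiv.swap a h := by simp [pr]
        rw [this, mul_assoc]
        rw [pr_cons] at hprod
        exact hprod
      refine SW.push (ih (a :: s) (List.nodup_cons.mpr ⟨has, hnd⟩)
        (by simp [Ne.symm hha, hhs]) (fun hm => hhw (List.mem_cons_of_mem _ hm)) hprod' ?_ ?_) has
      · intro b hb
        rcases List.mem_cons.mp hb with rfl | hb
        · omega
        · have hba : b ≠ a := fun e => has (e ▸ hb)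
          have := hc1 b hb
          rwa [List.count_cons_of_ne (Ne.symm hba)] at this
      · intro x hxw hxs
        simp only [List.mem_cons, not_or] at hxs
        have := hc2 x (List.mem_cons_of_mem _ hxw) hxs.2
        rwa [List.count_cons_of_ne (Ne.symm hxs.1)] at this

end Star14
namespace Star14
open List

lemma SW.split : ∀ {t w : List ℕ}, SW t w → ∀ (b : ℕ) (s : List ℕ), t = s ++ [b] →
    ∃ u v, w = u ++ b :: v ∧ SW s u ∧ SW [] v ∧ b ∉ u ∧ b ∉ v ∧ ∀ x ∈ u, x ∉ b :: v := by
  intro t w hsw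
  induction hsw with
  | nil => intro b s hb; exact absurd hb.symm (by simp)
  | push hg ha ih =>
    rename_i a s₀ w
    intro b s hb
    subst hb
    obtain ⟨u', v, rfl, hu', hv, hbu, hbv, hdisj⟩ := ih b (a :: s) rfl
    have hab : a ≠ b ∧ a ∉ s := by
      simp only [List.mem_append, List.mem_singleton, not_or] at ha
      exact ⟨ha.2, ha.1⟩
    have hau' : a ∈ u' := by
      have hcnt := (SW.count hu').1 a (List.mem_cons_self)
      exact List.count_pos_iff.mp (by omega)
    refine ⟨a :: u', v, rfl, SW.push hu' hab.2, hv, ?_, hbv, ?_⟩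
    · simp only [List.mem_cons, not_or]
      exact ⟨Ne.symm hab.1, hbu⟩
    · intro x hx
      rcases List.mem_cons.mp hx with rfl | hx
      · exact hdisj x hau'
      · exact hdisj x hx
  | pop hg haw has ih =>
    rename_i a s₀ w
    intro b s hb
    cases s with
    | nil =>
      simp only [List.nil_append, List.cons.injEq] at hb
      obtain ⟨rfl, rfl⟩ := hb
      exact ⟨[], w, rfl, SW.nil, hg, by simp, haw, by simp⟩
    | cons c s₁ =>
      simp only [List.cons_append, List.cons.injEq] at hb
      obtain ⟨rfl, rfl⟩ := hb
      obtain ⟨u', v, rfl, hu', hv, hbu, hbv, hdisj⟩ := ih b s₁ rfl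
      have hanotb : a ≠ b := by
        intro e; exact has (e ▸ (by simp : b ∈ s₁ ++ [b]))
      have has₁ : a ∉ s₁ := fun hm => has (List.mem_append_left _ hm)
      have hau' : a ∉ u' := fun hm => haw (List.mem_append_left _ hm)
      refine ⟨a :: u', v, rfl, SW.pop hu' hau' has₁, hv, ?_, hbv, ?_⟩
      · simp only [List.mem_cons, not_or]
        exact ⟨Ne.symm hanotb, hbu⟩
      · intro x hx
        rcases List.mem_cons.mp hx with rfl | hx
        · intro hm
          exact haw (by simpa using List.mem_append_right u' hm)
        · exact hdisj x hx

lemma SW.extend : ∀ {s u : List ℕ}, SW s u → ∀ {t w : List ℕ}, SW t w →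
    (∀ x ∈ u, x ∉ w) → (∀ x ∈ u, x ∉ t) → SW (s ++ t) (u ++ w) := by
  intro s u hsu
  induction hsu with
  | nil => intro t w htw _ _; exact htw
  | push hg ha ih =>
    rename_i a s u
    intro t w htw hd1 hd2
    have hat : a ∉ t := hd2 a (List.mem_cons_self)
    refine SW.push (ih htw (fun x hx => hd1 x (List.mem_cons_of_mem _ hx))
      (fun x hx => hd2 x (List.mem_cons_of_mem _ hx))) ?_
    simp only [List.mem_append, not_or]
    exact ⟨ha, hat⟩
  | pop hg hau has ih =>
    rename_i a s u
    intro t w htw hd1 hd2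
    have haw : a ∉ w := hd1 a (List.mem_cons_self)
    have hat : a ∉ t := hd2 a (List.mem_cons_self)
    refine SW.pop (ih htw (fun x hx => hd1 x (List.mem_cons_of_mem _ hx))
      (fun x hx => hd2 x (List.mem_cons_of_mem _ hx))) ?_ ?_
    · intro hm
      rcases List.mem_append.mp hm with hmm | hmm
      exacts [hau hmm, haw hmm]
    · intro hm
      rcases List.mem_append.mp hm with hmm | hmm
      exacts [has hmm, hat hmm]

lemma SW.glue {a : ℕ} {u v : List ℕ} (hu : SW [] u) (hv : SW [] v)
    (hau : a ∉ u) (hav : a ∉ v) (hdisj : ∀ x ∈ u, x ∉ v) :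
    SW [] (a :: (u ++ a :: v)) := by
  refine SW.push ?_ (by simp)
  have h1 : SW [a] (a :: v) := SW.pop hv hav (by simp)
  have := hu.extend h1 (t := [a]) ?_ ?_
  · simpa using this
  · intro x hx
    simp only [List.mem_cons, not_or]
    exact ⟨fun e => hau (e ▸ hx), hdisj x hx⟩
  · intro x hx
    simpa using fun (e : x = a) => hau (e ▸ hx)

end Star14
namespace Star14
open List Finset

def wordsOf (S : Finset ℕ) : ℕ → Finset (List ℕ)
  | 0 => {[]}
  | n+1 => S.biUnion fun a => (wordsOf S n).image (a :: ·)

lemma mem_wordsOf {S : Finset ℕ} : ∀ {n : ℕ} {w : List ℕ},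
    w ∈ wordsOf S n ↔ w.length = n ∧ ∀ x ∈ w, x ∈ S := by
  intro n
  induction n with
  | zero =>
    intro w
    constructor
    · intro hw
      simp only [wordsOf, Finset.mem_singleton] at hw
      subst hw; simp
    · intro ⟨hl, _⟩
      simp only [wordsOf, Finset.mem_singleton]
      exact List.length_eq_zero_iff.mp hl
  | succ n ih =>
    intro w
    simp only [wordsOf, Finset.mem_biUnion, Finset.mem_image]
    constructor
    · rintro ⟨a, ha, w', hw', rfl⟩
      obtain ⟨hl, hm⟩ := ih.mp hw'
      refine ⟨by simp [hl], ?_⟩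
      intro x hx
      rcases List.mem_cons.mp hx with rfl | hx
      exacts [ha, hm x hx]
    · rintro ⟨hl, hm⟩
      cases w with
      | nil => simp at hl
      | cons a w' =>
        exact ⟨a, hm a (List.mem_cons_self), w',
          ih.mpr ⟨by simpa using hl, fun x hx => hm x (List.mem_cons_of_mem _ hx)⟩, rfl⟩

noncomputable def V (S : Finset ℕ) : Finset (List ℕ) :=
  @Finset.filter _ (fun w => SW [] w ∧ w.toFinset = S) (Classical.decPred _)
    (wordsOf S (2 * S.card))

lemma mem_V {S : Finset ℕ} {w : List ℕ} : w ∈ V S ↔ SW [] w ∧ w.toFinset = S := by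
  rw [V, @Finset.mem_filter _ _ (Classical.decPred _)]
  constructor
  · exact fun hw => hw.2
  · intro hw
    refine ⟨mem_wordsOf.mpr ⟨?_, ?_⟩, hw⟩
    · rw [hw.1.length_eq, hw.2]
    · intro x hx
      rw [← hw.2]
      exact List.mem_toFinset.mpr hx

lemma takeWhile_eq {a : ℕ} : ∀ (u v : List ℕ), a ∉ u →
    (u ++ a :: v).takeWhile (fun x => x != a) = u ∧
      (u ++ a :: v).dropWhile (fun x => x != a) = a :: v := by
  intro u v hau
  induction u with
  | nil => simp
  | cons x u ih =>
    simp only [List.mem_cons, not_or] at hau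
    have hx : (x != a) = true := by simpa using Ne.symm hau.1
    obtain ⟨h1, h2⟩ := ih hau.2
    constructor
    · simpa [List.takeWhile_cons, hx] using h1
    · simpa [List.dropWhile_cons, hx] using h2

/-- canonical decomposition of a nonempty valid word -/
lemma decomp {S : Finset ℕ} {w : List ℕ} (hw : w ∈ V S) (hne : w ≠ []) :
    ∃ a u v, w = a :: (u ++ a :: v) ∧ a ∉ u ∧ a ∉ v ∧ SW [] u ∧ SW [] v ∧
      (∀ x ∈ u, x ∉ v) := by
  obtain ⟨hsw, hto⟩ := mem_V.mp hw
  obtain ⟨a, w₀, rfl⟩ : ∃ a w₀, w = a :: w₀ := by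
    cases w with
    | nil => exact absurd rfl hne
    | cons a w₀ => exact ⟨a, w₀, rfl⟩
  have hstep : SW [a] w₀ := by
    cases hsw with
    | push hg _ => exact hg
  obtain ⟨u, v, rfl, hu, hv, hbu, hbv, hdisj⟩ := hstep.split a [] rfl
  exact ⟨a, u, v, rfl, hbu, hbv, hu, hv, fun x hx hxv =>
    hdisj x hx (List.mem_cons_of_mem _ hxv)⟩

theorem card_V : ∀ (n : ℕ) (S : Finset ℕ), S.card = n →
    (V S).card = catalan n * n.factorial := by
  intro n
  induction n using Nat.strong_induction_on with
  | _ n IH =>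
    intro S hS
    match n, hS with
    | 0, hS =>
      have hSe : S = ∅ := Finset.card_eq_zero.mp hS
      subst hSe
      have : V (∅ : Finset ℕ) = {([] : List ℕ)} := by
        ext w
        rw [mem_V, Finset.mem_singleton]
        constructor
        · rintro ⟨_, hto⟩
          exact List.toFinset_eq_empty_iff w |>.mp hto
        · rintro rfl
          exact ⟨SW.nil, rfl⟩
      rw [this]
      simp [catalan]
    | (m+1), hS =>
      -- the sigma finset of decompositions
      set X : Finset ((_ : ℕ) × (_ : Finset ℕ) × List ℕ × List ℕ) :=
        S.sigma (fun a => ((S.erase a).powerset).sigma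
          (fun T => (V T) ×ˢ (V ((S.erase a) \ T)))) with hX
      have hbij : (V S).card = X.card := by
        refine Finset.card_bij'
          (fun w _ => ⟨w.headI, (w.tail.takeWhile (fun x => x != w.headI)).toFinset,
            (w.tail.takeWhile (fun x => x != w.headI),
             (w.tail.dropWhile (fun x => x != w.headI)).tail)⟩)
          (fun x _ => x.1 :: (x.2.2.1 ++ x.1 :: x.2.2.2)) ?_ ?_ ?_ ?_
        · -- forward membership
          intro w hw
          have hne : w ≠ [] := by
            intro he
            have h0 := (mem_V.mp hw).2
            rw [he] at h0
            have hSe : S = ∅ := by simpa using h0.symm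
            rw [hSe] at hS
            simp at hS
          obtain ⟨a, u, v, rfl, hau, hav, hu, hv, hdisj⟩ := decomp hw hne
          obtain ⟨hsw, hto⟩ := mem_V.mp hw
          obtain ⟨htw, hdw⟩ := takeWhile_eq u v hau
          simp only [List.headI, List.tail_cons, htw, hdw, List.tail_cons]
          rw [hX]
          rw [Finset.mem_sigma]
          constructor
          · rw [← hto]; simp
          rw [Finset.mem_sigma]
          have husub : u.toFinset ⊆ S.erase a := by
            intro x hx
            have hxu := List.mem_toFinset.mp hx
            rw [Finset.mem_erase]
            constructor
            · intro he; exact hau (he ▸ hxu)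
            · rw [← hto]; simp [hxu]
          constructor
          · exact Finset.mem_powerset.mpr husub
          rw [Finset.mem_product]
          constructor
          · exact mem_V.mpr ⟨hu, rfl⟩
          · refine mem_V.mpr ⟨hv, ?_⟩
            ext x
            simp only [List.mem_toFinset, Finset.mem_sdiff, Finset.mem_erase]
            constructor
            · intro hxv
              refine ⟨⟨fun he => hav (he ▸ hxv), ?_⟩, ?_⟩
              · rw [← hto]; simp [hxv]
              · exact fun hxu => hdisj x hxu hxv
            · rintro ⟨⟨hxa, hxS⟩, hxT⟩
              rw [← hto] at hxS
              simp only [List.toFinset_cons, List.toFinset_append, Finset.mem_insert,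
                Finset.mem_union, List.mem_toFinset] at hxS
              rcases hxS with rfl | hxS
              · exact absurd rfl hxa
              rcases hxS with hxu | hxS
              · exact absurd hxu hxT
              rcases hxS with rfl | hxv
              · exact absurd rfl hxa
              · exact hxv
        · -- backward membership
          rintro ⟨a, T, u, v⟩ hx
          simp only [hX, Finset.mem_sigma, Finset.mem_product] at hx
          obtain ⟨haS, hT, hu, hv⟩ := hx
          obtain ⟨hswu, htou⟩ := mem_V.mp hu
          obtain ⟨hswv, htov⟩ := mem_V.mp hv
          have hTsub := Finset.mem_powerset.mp hT
          have hau : a ∉ u := by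
            intro hm
            have : a ∈ S.erase a := hTsub (htou ▸ List.mem_toFinset.mpr hm)
            simp at this
          have hav : a ∉ v := by
            intro hm
            have : a ∈ S.erase a \ T := htov ▸ List.mem_toFinset.mpr hm
            simp at this
          have hdisj : ∀ x ∈ u, x ∉ v := by
            intro x hxu hxv
            have h1 : x ∈ T := htou ▸ List.mem_toFinset.mpr hxu
            have h2 : x ∈ S.erase a \ T := htov ▸ List.mem_toFinset.mpr hxv
            exact (Finset.mem_sdiff.mp h2).2 h1
          refine mem_V.mpr ⟨SW.glue hswu hswv hau hav hdisj, ?_⟩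
          simp only [List.toFinset_cons, List.toFinset_append]
          rw [htou, htov]
          rw [Finset.union_insert, Finset.insert_idem,
            Finset.union_sdiff_of_subset hTsub, Finset.insert_erase haS]
        · -- left inverse
          intro w hw
          have hne : w ≠ [] := by
            intro he
            have h0 := (mem_V.mp hw).2
            rw [he] at h0
            have hSe : S = ∅ := by simpa using h0.symm
            rw [hSe] at hS
            simp at hS
          obtain ⟨a, u, v, rfl, hau, _, _, _, _⟩ := decomp hw hne
          obtain ⟨htw, hdw⟩ := takeWhile_eq u v hau
          simp only [List.headI, List.tail_cons, htw, hdw, List.tail_cons]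
        · -- right inverse
          rintro ⟨a, T, u, v⟩ hx
          simp only [hX, Finset.mem_sigma, Finset.mem_product] at hx
          obtain ⟨haS, hT, hu, hv⟩ := hx
          obtain ⟨hswu, htou⟩ := mem_V.mp hu
          have hTsub := Finset.mem_powerset.mp hT
          have hau : a ∉ u := by
            intro hm
            have : a ∈ S.erase a := hTsub (htou ▸ List.mem_toFinset.mpr hm)
            simp at this
          subst htou
          obtain ⟨htw, hdw⟩ := takeWhile_eq u v hau
          simp only [List.headI, List.tail_cons, htw, hdw, List.tail_cons]
      rw [hbij, hX, Finset.card_sigma]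
      have hinner : ∀ a ∈ S, (((S.erase a).powerset).sigma
          (fun T => (V T) ×ˢ (V ((S.erase a) \ T)))).card
          = m.factorial * catalan (m + 1) := by
        intro a haS
        have hS' : (S.erase a).card = m := by
          rw [Finset.card_erase_of_mem haS, hS]
          omega
        rw [Finset.card_sigma]
        have hterm : ∀ T ∈ (S.erase a).powerset,
            ((V T) ×ˢ (V ((S.erase a) \ T))).card
            = catalan T.card * T.card.factorial *
              (catalan (m - T.card) * (m - T.card).factorial) := by
          intro T hT
          have hsub : T ⊆ S.erase a := Finset.mem_powerset.mp hT
          have hTc : T.card ≤ m := hS' ▸ Finset.card_le_card hsub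
          have hd : ((S.erase a) \ T).card = m - T.card := by
            rw [Finset.card_sdiff_of_subset hsub, hS']
          rw [Finset.card_product,
            IH T.card (Nat.lt_succ_of_le hTc) T rfl,
            IH (m - T.card) (Nat.lt_succ_of_le (Nat.sub_le _ _)) _ hd]
        rw [Finset.sum_congr rfl hterm]
        have happ := Finset.sum_powerset_apply_card
          (fun j => catalan j * j.factorial * (catalan (m - j) * (m - j).factorial))
          (x := S.erase a)
        rw [hS'] at happ
        rw [happ]
        have hstep : ∀ j ∈ Finset.range (m+1),
            m.choose j • (catalan j * j.factorial * (catalan (m - j) * (m - j).factorial))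
            = m.factorial * (catalan j * catalan (m - j)) := by
          intro j hj
          have hjm : j ≤ m := Nat.lt_succ_iff.mp (Finset.mem_range.mp hj)
          rw [smul_eq_mul, ← Nat.choose_mul_factorial_mul_factorial hjm]
          ring
        rw [Finset.sum_congr rfl hstep, ← Finset.mul_sum]
        congr 1
        rw [catalan_succ]
        exact (Fin.sum_univ_eq_sum_range (fun i => catalan i * catalan (m - i)) (m+1)).symm
      rw [Finset.sum_congr rfl hinner, Finset.sum_const, hS, smul_eq_mul,
        Nat.factorial_succ]
      ring
end Star14
namespace Star14
open List

lemma valid_iff {h : ℕ} {S : Finset ℕ} (hhS : h ∉ S) {w : List ℕ}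
    (hlen : w.length = 2 * S.card) :
    (pr h w = 1 ∧ w.toFinset = S) ↔ w ∈ V S := by
  constructor
  · rintro ⟨hpr, hto⟩
    have hhw : h ∉ w := fun hm => hhS (hto ▸ List.mem_toFinset.mpr hm)
    -- every element occurs exactly twice
    have hge : ∀ x ∈ w.toFinset, 2 ≤ w.count x := by
      intro x hx
      have hxw := List.mem_toFinset.mp hx
      have h1 : 0 < w.count x := List.count_pos_iff.mpr hxw
      by_contra hlt
      push_neg at hlt
      have : w.count x = 1 := by omega
      exact pr_ne_one_of_count_one hhw hxw this hpr
    have hsum : ∑ x ∈ w.toFinset, w.count x = 2 * w.toFinset.card := by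
      have : ∑ x ∈ w.toFinset, w.count x = w.length := by
        simpa using Multiset.toFinset_sum_count_eq (w : Multiset ℕ)
      rw [this, hlen, hto]
    have htwo : ∀ x ∈ w, w.count x = 2 := by
      intro x hxw
      by_contra hne
      have hx : x ∈ w.toFinset := List.mem_toFinset.mpr hxw
      have hgt : 2 < w.count x := lt_of_le_of_ne (hge x hx) (Ne.symm hne)
      have hlt : ∑ _y ∈ w.toFinset, 2 < ∑ y ∈ w.toFinset, w.count y :=
        Finset.sum_lt_sum (fun i hi => hge i hi) ⟨x, hx, hgt⟩
      rw [Finset.sum_const, smul_eq_mul] at hlt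
      omega
    have hsw : SW [] w := by
      refine SW.complete h w [] List.nodup_nil (by simp) hhw (by simpa using hpr) (by simp) ?_
      intro x hxw _
      exact htwo x hxw
    exact mem_V.mpr ⟨hsw, hto⟩
  · intro hw
    obtain ⟨hsw, hto⟩ := mem_V.mp hw
    exact ⟨hsw.prod_eq_one h, hto⟩

end Star14

/-- In `ℂ[S_n]`, the number of sequences `((j_1,h), ..., (j_k,h))` of transpositions with
`k` even and `1 ≤ j_1, ..., j_k < h`, whose product `(j_1,h)···(j_k,h)` is the identity and
whose support `{j_1, ..., j_k, h}` is a fixed `(k/2+1)`-element set `D ⊆ {1, ..., n}` with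
maximum `h`, equals `Cat(k/2)·(k/2)!`, where `Cat` denotes the Catalan numbers. -/
theorem stmt14 (n k : ℕ) (hk : Even k) (D : Finset ℕ) (h : ℕ)
    (hD : ∀ x ∈ D, 1 ≤ x ∧ x ≤ n)
    (hcard : D.card = k / 2 + 1) (hmem : h ∈ D) (hmax : ∀ x ∈ D, x ≤ h) :
    Nat.card {f : Fin k → ℕ //
        (∀ i, f i < h) ∧
        (∀ x, (x = h ∨ ∃ i, f i = x) ↔ x ∈ D) ∧
        (List.ofFn fun i => Equiv.swap (f i) h).prod = 1} =
      catalan (k / 2) * (k / 2).factorial := by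
  classical
  set m := k / 2 with hm
  have hk2 : k = 2 * m := (Nat.mul_div_cancel' hk.two_dvd).symm
  set S := D.erase h with hSdef
  have hhS : h ∉ S := Finset.notMem_erase _ _
  have hScard : S.card = m := by
    rw [hSdef, Finset.card_erase_of_mem hmem, hcard]
    omega
  have hmemS : ∀ x, x ∈ S ↔ (x ∈ D ∧ x ≠ h) := by
    intro x
    rw [hSdef, Finset.mem_erase]
    tauto
  have hltS : ∀ x ∈ S, x < h := by
    intro x hx
    obtain ⟨hxD, hxh⟩ := (hmemS x).mp hx
    exact lt_of_le_of_ne (hmax x hxD) hxh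
  -- the bijection
  set A : (Fin k → ℕ) → Prop := fun f =>
    (∀ i, f i < h) ∧
    (∀ x, (x = h ∨ ∃ i, f i = x) ↔ x ∈ D) ∧
    (List.ofFn fun i => Equiv.swap (f i) h).prod = 1 with hA
  have key : ∀ f : Fin k → ℕ, A f → List.ofFn f ∈ Star14.V S := by
    intro f ⟨h1, h2, h3⟩
    have hto : (List.ofFn f).toFinset = S := by
      ext x
      rw [List.mem_toFinset, List.mem_ofFn, hmemS x]
      constructor
      · rintro ⟨i, rfl⟩
        refine ⟨(h2 (f i)).mp (Or.inr ⟨i, rfl⟩), Nat.ne_of_lt (h1 i)⟩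
      · rintro ⟨hxD, hxh⟩
        rcases (h2 x).mpr hxD with he | ⟨i, hi⟩
        · exact absurd he hxh
        · exact ⟨i, hi⟩
    have hpr : Star14.pr h (List.ofFn f) = 1 := by
      rw [Star14.pr, List.map_ofFn]
      exact h3
    refine (Star14.valid_iff hhS ?_).mp ⟨hpr, hto⟩
    rw [List.length_ofFn, hScard]
    exact hk2
  have keyback : ∀ w ∈ Star14.V S, ∃ f : Fin k → ℕ, A f ∧ List.ofFn f = w := by
    intro w hw
    obtain ⟨hsw, hto⟩ := Star14.mem_V.mp hw
    have hl : w.length = k := by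
      rw [hsw.length_eq, hto, hScard]
      omega
    refine ⟨fun i => w.get (Fin.cast hl.symm i), ⟨?_, ?_, ?_⟩, ?_⟩
    · intro i
      exact hltS _ (hto ▸ List.mem_toFinset.mpr (w.get_mem _))
    · intro x
      constructor
      · rintro (rfl | ⟨i, rfl⟩)
        · exact hmem
        · exact ((hmemS _).mp (hto ▸ List.mem_toFinset.mpr (w.get_mem _))).1
      · intro hxD
        by_cases hxh : x = h
        · exact Or.inl hxh
        · refine Or.inr ?_
          have hxw : x ∈ w := List.mem_toFinset.mp (hto ▸ (hmemS x).mpr ⟨hxD, hxh⟩)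
          obtain ⟨i, hi⟩ := List.mem_iff_get.mp hxw
          exact ⟨Fin.cast hl i, by simpa using hi⟩
    · have hpr := hsw.prod_eq_one h
      rw [Star14.pr] at hpr
      have : (List.ofFn fun i : Fin k => Equiv.swap (w.get (Fin.cast hl.symm i)) h)
          = w.map (fun a => Equiv.swap a h) := by
        apply List.ext_get
        · simp [hl]
        · intro i h1 h2
          simp [List.get_ofFn]
      rw [this]
      exact hpr
    · apply List.ext_get
      · simp [hl]
      · intro i h1 h2
        simp [List.get_ofFn]
  have hbij : Nat.card {f : Fin k → ℕ // A f} = (Star14.V S).card := by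
    have e : {f : Fin k → ℕ // A f} ≃ {w : List ℕ // w ∈ Star14.V S} := by
      refine Equiv.ofBijective (fun f => ⟨List.ofFn f.1, key f.1 f.2⟩) ⟨?_, ?_⟩
      · intro f g hfg
        have : List.ofFn f.1 = List.ofFn g.1 := congrArg Subtype.val hfg
        exact Subtype.ext (List.ofFn_injective this)
      · rintro ⟨w, hw⟩
        obtain ⟨f, hf, hof⟩ := keyback w hw
        exact ⟨⟨f, hf⟩, Subtype.ext hof⟩
    rw [Nat.card_congr e, Nat.card_eq_fintype_card, Fintype.card_coe]
  calc Nat.card {f : Fin k → ℕ // A f} = (Star14.V S).card := hbij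
    _ = catalan m * m.factorial := Star14.card_V m S hScard
end

section
/- Let Γ be the set of positive measures μ on the triangle Δ = {(x,y) ∈ [0,1]² : y ≥ x} with total mass at most 1 and subuniform marginals. Then for every μ ∈ Γ, ∫_Δ (y−x) dμ(x,y) ≤ 1/4. -/
open MeasureTheory

/-- The triangle `Δ = {(x, y) ∈ [0,1]² : y ≥ x}`. -/
def triangleSet : Set (ℝ × ℝ) := {p | 0 ≤ p.1 ∧ p.1 ≤ p.2 ∧ p.2 ≤ 1}

/-- Let `Γ` be the set of positive measures `μ` on the triangle
`Δ = {(x,y) ∈ [0,1]² : y ≥ x}` with total mass at most `1` and subuniform marginals.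
Then for every `μ ∈ Γ`, `∫_Δ (y−x) dμ(x,y) ≤ 1/4`. -/
theorem stmt17 (μ : Measure (ℝ × ℝ))
    (hsupp : μ triangleSetᶜ = 0)
    (hmass : μ Set.univ ≤ 1)
    (hmx : ∀ a b : ℝ, 0 ≤ a → a ≤ b → b ≤ 1 →
      μ ({p : ℝ × ℝ | a ≤ p.1 ∧ p.1 ≤ b} ∩ triangleSet) ≤ ENNReal.ofReal (b - a))
    (hmy : ∀ a b : ℝ, 0 ≤ a → a ≤ b → b ≤ 1 →
      μ ({p : ℝ × ℝ | a ≤ p.2 ∧ p.2 ≤ b} ∩ triangleSet) ≤ ENNReal.ofReal (b - a)) :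
    ∫ p in triangleSet, (p.2 - p.1) ∂μ ≤ 1 / 4 := by
  have hfin : IsFiniteMeasure μ := ⟨lt_of_le_of_lt hmass ENNReal.one_lt_top⟩
  have hΔ : MeasurableSet triangleSet :=
    (measurableSet_le measurable_const measurable_fst).inter
      ((measurableSet_le measurable_fst measurable_snd).inter
       (measurableSet_le measurable_snd measurable_const))
  -- slice measure
  set g : ℝ → ENNReal := fun t => μ ({p : ℝ × ℝ | p.1 < t ∧ t ≤ p.2} ∩ triangleSet) with hg
  have hSt : ∀ t : ℝ, MeasurableSet {p : ℝ × ℝ | p.1 < t ∧ t ≤ p.2} := fun t =>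
    (measurableSet_lt measurable_fst measurable_const).inter
      (measurableSet_le measurable_const measurable_snd)
  -- Step 1 : Fubini
  have step1 : ∫⁻ p in triangleSet, ENNReal.ofReal (p.2 - p.1) ∂μ = ∫⁻ t, g t := by
    have h1 : ∀ p : ℝ × ℝ, ENNReal.ofReal (p.2 - p.1)
        = ∫⁻ t, (Set.Ioc p.1 p.2).indicator (fun _ => (1:ENNReal)) t := by
      intro p
      rw [lintegral_indicator measurableSet_Ioc, setLIntegral_one, Real.volume_Ioc]
    have hmeas : AEMeasurable
        (Function.uncurry fun (p : ℝ × ℝ) (t : ℝ) =>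
          (Set.Ioc p.1 p.2).indicator (fun _ => (1:ENNReal)) t)
        ((μ.restrict triangleSet).prod volume) := by
      have : (Function.uncurry fun (p : ℝ × ℝ) (t : ℝ) =>
          (Set.Ioc p.1 p.2).indicator (fun _ => (1:ENNReal)) t)
          = Set.indicator {q : (ℝ × ℝ) × ℝ | q.1.1 < q.2 ∧ q.2 ≤ q.1.2}
              (fun _ => (1:ENNReal)) := by
        funext q
        simp [Function.uncurry, Set.indicator_apply, Set.mem_Ioc]
      rw [this]
      exact (Measurable.indicator measurable_const
        ((measurableSet_lt (measurable_fst.comp measurable_fst) measurable_snd).inter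
          (measurableSet_le measurable_snd (measurable_snd.comp measurable_fst)))).aemeasurable
    calc ∫⁻ p in triangleSet, ENNReal.ofReal (p.2 - p.1) ∂μ
        = ∫⁻ p in triangleSet,
            (∫⁻ t, (Set.Ioc p.1 p.2).indicator (fun _ => (1:ENNReal)) t) ∂μ := by
          simp_rw [← h1]
      _ = ∫⁻ t, ∫⁻ p in triangleSet,
            (Set.Ioc p.1 p.2).indicator (fun _ => (1:ENNReal)) t ∂μ :=
          lintegral_lintegral_swap hmeas
      _ = ∫⁻ t, g t := by
          refine lintegral_congr fun t => ?_
          have : (fun p : ℝ × ℝ => (Set.Ioc p.1 p.2).indicator (fun _ => (1:ENNReal)) t)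
              = Set.indicator {p : ℝ × ℝ | p.1 < t ∧ t ≤ p.2} (fun _ => (1:ENNReal)) := by
            funext p
            simp [Set.indicator_apply, Set.mem_Ioc]
          rw [this]
          show ∫⁻ p, Set.indicator {p : ℝ × ℝ | p.1 < t ∧ t ≤ p.2} (fun _ => (1:ENNReal)) p
              ∂(μ.restrict triangleSet) = g t
          rw [lintegral_indicator (hSt t), setLIntegral_one,
            Measure.restrict_apply (hSt t)]
  -- Step 2 : bound ∫⁻ g ≤ 1/4
  have step2 : ∫⁻ t, g t ≤ ENNReal.ofReal (1/4) := by
    have hcompl : ∫⁻ t in (Set.Ioc (0:ℝ) 1)ᶜ, g t = 0 := by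
      refine le_antisymm ?_ zero_le
      have hzero : ∀ t ∈ (Set.Ioc (0:ℝ) 1)ᶜ, g t ≤ 0 := by
        intro t ht
        have hempty : ({p : ℝ × ℝ | p.1 < t ∧ t ≤ p.2} ∩ triangleSet) = ∅ := by
          ext p
          simp only [Set.mem_inter_iff, Set.mem_setOf_eq, Set.mem_empty_iff_false,
            iff_false, triangleSet]
          rintro ⟨⟨ha, hb⟩, hc, hd, he⟩
          have h0 : (0:ℝ) < t := lt_of_le_of_lt hc ha
          have h1 : t ≤ 1 := le_trans hb he
          have := ht
          simp only [Set.mem_compl_iff, Set.mem_Ioc, not_and, not_le] at this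
          exact absurd (this h0) (not_lt.2 h1)
        simp [hg, hempty]
      calc ∫⁻ t in (Set.Ioc (0:ℝ) 1)ᶜ, g t
          ≤ ∫⁻ _ in (Set.Ioc (0:ℝ) 1)ᶜ, (0:ENNReal) :=
            lintegral_mono_ae (ae_restrict_of_forall_mem measurableSet_Ioc.compl hzero)
        _ = 0 := by simp
    have hbound1 : ∫⁻ t in Set.Ioc (0:ℝ) (1/2), g t
        ≤ ∫⁻ t in Set.Ioc (0:ℝ) (1/2), ENNReal.ofReal t := by
      refine setLIntegral_mono measurable_id.ennreal_ofReal fun t ht => ?_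
      have hsub : ({p : ℝ × ℝ | p.1 < t ∧ t ≤ p.2} ∩ triangleSet)
          ⊆ ({p : ℝ × ℝ | 0 ≤ p.1 ∧ p.1 ≤ t} ∩ triangleSet) := by
        rintro p ⟨h1, h2⟩
        exact ⟨⟨h2.1, h1.1.le⟩, h2⟩
      calc g t ≤ μ ({p : ℝ × ℝ | 0 ≤ p.1 ∧ p.1 ≤ t} ∩ triangleSet) := measure_mono hsub
        _ ≤ ENNReal.ofReal (t - 0) := hmx 0 t le_rfl ht.1.le (by linarith [ht.2])
        _ = ENNReal.ofReal t := by norm_num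
    have hbound2 : ∫⁻ t in Set.Ioc (1/2:ℝ) 1, g t
        ≤ ∫⁻ t in Set.Ioc (1/2:ℝ) 1, ENNReal.ofReal (1 - t) := by
      refine setLIntegral_mono (by fun_prop) fun t ht => ?_
      have hsub : ({p : ℝ × ℝ | p.1 < t ∧ t ≤ p.2} ∩ triangleSet)
          ⊆ ({p : ℝ × ℝ | t ≤ p.2 ∧ p.2 ≤ 1} ∩ triangleSet) := by
        rintro p ⟨h1, h2⟩
        exact ⟨⟨h1.2, h2.2.2⟩, h2⟩
      calc g t ≤ μ ({p : ℝ × ℝ | t ≤ p.2 ∧ p.2 ≤ 1} ∩ triangleSet) := measure_mono hsub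
        _ ≤ ENNReal.ofReal (1 - t) := hmy t 1 (by linarith [ht.1]) ht.2 le_rfl
    have hval1 : ∫⁻ t in Set.Ioc (0:ℝ) (1/2), ENNReal.ofReal t
        = ENNReal.ofReal (1/8) := by
      have hint : IntegrableOn (fun t : ℝ => t) (Set.Ioc (0:ℝ) (1/2)) volume :=
        continuous_id.integrableOn_Ioc
      have hkey := ofReal_integral_eq_lintegral_ofReal hint
        (ae_restrict_of_forall_mem measurableSet_Ioc fun x hx => hx.1.le)
      rw [← hkey]
      congr 1
      rw [← intervalIntegral.integral_of_le (by norm_num : (0:ℝ) ≤ 1/2)]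
      simp
      norm_num
    have hval2 : ∫⁻ t in Set.Ioc (1/2:ℝ) 1, ENNReal.ofReal (1 - t)
        = ENNReal.ofReal (1/8) := by
      have hint : IntegrableOn (fun t : ℝ => 1 - t) (Set.Ioc (1/2:ℝ) 1) volume :=
        (continuous_const.sub continuous_id).integrableOn_Ioc
      have hkey := ofReal_integral_eq_lintegral_ofReal hint
        (ae_restrict_of_forall_mem measurableSet_Ioc fun x hx => by
          have h1 := hx.2
          show (0:ℝ) ≤ 1 - x
          linarith)
      rw [← hkey]
      congr 1
      rw [← intervalIntegral.integral_of_le (by norm_num : (1/2:ℝ) ≤ 1),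
        intervalIntegral.integral_sub intervalIntegrable_const intervalIntegral.intervalIntegrable_id]
      simp
      norm_num
    calc ∫⁻ t, g t
        = (∫⁻ t in Set.Ioc (0:ℝ) 1, g t) + ∫⁻ t in (Set.Ioc (0:ℝ) 1)ᶜ, g t :=
          by exact (lintegral_add_compl g measurableSet_Ioc).symm
      _ = ∫⁻ t in Set.Ioc (0:ℝ) 1, g t := by rw [hcompl, add_zero]
      _ = ∫⁻ t in Set.Ioc (0:ℝ) (1/2) ∪ Set.Ioc (1/2:ℝ) 1, g t := by
          rw [Set.Ioc_union_Ioc_eq_Ioc (by norm_num) (by norm_num)]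
      _ = (∫⁻ t in Set.Ioc (0:ℝ) (1/2), g t) + ∫⁻ t in Set.Ioc (1/2:ℝ) 1, g t :=
          by exact lintegral_union measurableSet_Ioc (Set.Ioc_disjoint_Ioc_of_le le_rfl)
      _ ≤ ENNReal.ofReal (1/8) + ENNReal.ofReal (1/8) :=
          add_le_add (hbound1.trans hval1.le) (hbound2.trans hval2.le)
      _ = ENNReal.ofReal (1/4) := by
          rw [← ENNReal.ofReal_add (by norm_num) (by norm_num)]; norm_num
  -- Step 3 : convert Bochner integral
  have heq : ∫ p in triangleSet, (p.2 - p.1) ∂μ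
      = (∫⁻ p in triangleSet, ENNReal.ofReal (p.2 - p.1) ∂μ).toReal := by
    apply integral_eq_lintegral_of_nonneg_ae
    · exact ae_restrict_of_forall_mem hΔ fun p hp => sub_nonneg.2 hp.2.1
    · exact (continuous_snd.sub continuous_fst).aestronglyMeasurable
  rw [heq, step1]
  calc (∫⁻ t, g t).toReal ≤ (ENNReal.ofReal (1/4)).toReal :=
        ENNReal.toReal_mono (by simp) step2
    _ = 1/4 := by rw [ENNReal.toReal_ofReal]; norm_num
end

section
/- Let μ be a subprobability on [0,1/2]×[1/2,1] with uniform marginals (x-marginal the Lebesgue measure on [0,1/2], y-marginal the Lebesgue measure on [1/2,1]) such that ∫∫ 1[x₁<x₂<y₁<y₂] dμ(x₁,y₁) dμ(x₂,y₂) = 0. Then μ equals the pushforward of Lebesgue measure on [0,1/2] under x ↦ (x, 1−x); equivalently, μ([0,a]×[1−b,1]) = min(a,b) for all a,b ∈ [0,1/2]. -/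
open MeasureTheory

/-- Let `μ` be a subprobability on `[0,1/2]×[1/2,1]` with uniform marginals (the `x`-marginal
is Lebesgue measure on `[0,1/2]`, the `y`-marginal is Lebesgue measure on `[1/2,1]`) such
that `∫∫ 1[x₁<x₂<y₁<y₂] dμ(x₁,y₁) dμ(x₂,y₂) = 0`.  Then `μ` equals the pushforward of
Lebesgue measure on `[0,1/2]` under `x ↦ (x, 1−x)`; equivalently,
`μ([0,a]×[1−b,1]) = min(a,b)` for all `a, b ∈ [0,1/2]`. -/
theorem stmt18 (μ : Measure (ℝ × ℝ))
    (hmass : μ Set.univ ≤ 1)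
    (hsupp : μ (Set.Icc (0 : ℝ) (1 / 2) ×ˢ Set.Icc (1 / 2 : ℝ) 1)ᶜ = 0)
    (hmx : ∀ a b : ℝ, 0 ≤ a → a ≤ b → b ≤ 1 / 2 →
      μ {p : ℝ × ℝ | a ≤ p.1 ∧ p.1 ≤ b} = ENNReal.ofReal (b - a))
    (hmy : ∀ a b : ℝ, 1 / 2 ≤ a → a ≤ b → b ≤ 1 →
      μ {p : ℝ × ℝ | a ≤ p.2 ∧ p.2 ≤ b} = ENNReal.ofReal (b - a))
    (hcross : (μ.prod μ)
      {q : (ℝ × ℝ) × (ℝ × ℝ) | q.1.1 < q.2.1 ∧ q.2.1 < q.1.2 ∧ q.1.2 < q.2.2} = 0) :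
    ∀ a b : ℝ, 0 ≤ a → a ≤ 1 / 2 → 0 ≤ b → b ≤ 1 / 2 →
      μ (Set.Icc 0 a ×ˢ Set.Icc (1 - b) 1) = ENNReal.ofReal (min a b) := by
  haveI : IsFiniteMeasure μ := ⟨lt_of_le_of_lt hmass ENNReal.one_lt_top⟩
  -- null sets from the support hypothesis
  have hN : ∀ s : Set (ℝ × ℝ),
      s ⊆ (Set.Icc (0 : ℝ) (1 / 2) ×ˢ Set.Icc (1 / 2 : ℝ) 1)ᶜ → μ s = 0 :=
    fun s hs => measure_mono_null hs hsupp
  have hx_neg : μ {p : ℝ × ℝ | p.1 < 0} = 0 :=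
    hN _ (fun p hp hmem => absurd hmem.1.1 (not_le.2 hp))
  have hx_big : μ {p : ℝ × ℝ | 1 / 2 < p.1} = 0 :=
    hN _ (fun p hp hmem => absurd hmem.1.2 (not_le.2 hp))
  have hy_small : μ {p : ℝ × ℝ | p.2 < 1 / 2} = 0 :=
    hN _ (fun p hp hmem => absurd hmem.2.1 (not_le.2 hp))
  have hy_big : μ {p : ℝ × ℝ | 1 < p.2} = 0 :=
    hN _ (fun p hp hmem => absurd hmem.2.2 (not_le.2 hp))
  -- vertical and horizontal lines are null
  have hlx : ∀ c : ℝ, 0 ≤ c → c ≤ 1 / 2 → μ {p : ℝ × ℝ | p.1 = c} = 0 := by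
    intro c h1 h2
    have h := hmx c c h1 le_rfl h2
    rw [sub_self, ENNReal.ofReal_zero] at h
    exact measure_mono_null (fun p hp =>
      show c ≤ p.1 ∧ p.1 ≤ c from ⟨le_of_eq (hp : p.1 = c).symm, le_of_eq hp⟩) h
  have hly : ∀ c : ℝ, 1 / 2 ≤ c → c ≤ 1 → μ {p : ℝ × ℝ | p.2 = c} = 0 := by
    intro c h1 h2
    have h := hmy c c h1 le_rfl h2
    rw [sub_self, ENNReal.ofReal_zero] at h
    exact measure_mono_null (fun p hp =>
      show c ≤ p.2 ∧ p.2 ≤ c from ⟨le_of_eq (hp : p.2 = c).symm, le_of_eq hp⟩) h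
  have hx_ge_half : μ {p : ℝ × ℝ | 1 / 2 ≤ p.1} = 0 := by
    have hcov : {p : ℝ × ℝ | 1 / 2 ≤ p.1} ⊆
        {p : ℝ × ℝ | p.1 = 1 / 2} ∪ {p : ℝ × ℝ | 1 / 2 < p.1} := by
      intro p hp
      rcases eq_or_lt_of_le (show (1:ℝ) / 2 ≤ p.1 from hp) with h | h
      · exact Or.inl h.symm
      · exact Or.inr h
    exact measure_mono_null hcov
      (measure_union_null (hlx (1 / 2) (by norm_num) le_rfl) hx_big)
  -- the x-marginal of a lower set
  have hA : ∀ a : ℝ, 0 ≤ a → a ≤ 1 / 2 →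
      μ {p : ℝ × ℝ | p.1 ≤ a} = ENNReal.ofReal a := by
    intro a h1 h2
    have hm := hmx 0 a le_rfl h1 h2
    rw [sub_zero] at hm
    refine le_antisymm ?_ ?_
    · have hcov : {p : ℝ × ℝ | p.1 ≤ a} ⊆
          {p : ℝ × ℝ | 0 ≤ p.1 ∧ p.1 ≤ a} ∪ {p : ℝ × ℝ | p.1 < 0} := by
        intro p hp
        by_cases h : 0 ≤ p.1
        · exact Or.inl ⟨h, hp⟩
        · exact Or.inr (not_le.1 h)
      calc μ {p : ℝ × ℝ | p.1 ≤ a}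
          ≤ μ ({p : ℝ × ℝ | 0 ≤ p.1 ∧ p.1 ≤ a} ∪ {p : ℝ × ℝ | p.1 < 0}) := measure_mono hcov
        _ ≤ μ {p : ℝ × ℝ | 0 ≤ p.1 ∧ p.1 ≤ a} + μ {p : ℝ × ℝ | p.1 < 0} := measure_union_le _ _
        _ = ENNReal.ofReal a := by rw [hm, hx_neg, add_zero]
    · rw [← hm]
      exact measure_mono (fun p hp => hp.2)
  -- the y-marginal of a strict upper set
  have hB : ∀ b : ℝ, 0 ≤ b → b ≤ 1 / 2 →
      μ {p : ℝ × ℝ | 1 - b < p.2} = ENNReal.ofReal b := by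
    intro b h1 h2
    have hm := hmy (1 - b) 1 (by linarith) (by linarith) le_rfl
    rw [sub_sub_cancel] at hm
    refine le_antisymm ?_ ?_
    · have hcov : {p : ℝ × ℝ | 1 - b < p.2} ⊆
          {p : ℝ × ℝ | 1 - b ≤ p.2 ∧ p.2 ≤ 1} ∪ {p : ℝ × ℝ | 1 < p.2} := by
        intro p hp
        by_cases h : p.2 ≤ 1
        · exact Or.inl ⟨le_of_lt hp, h⟩
        · exact Or.inr (not_le.1 h)
      calc μ {p : ℝ × ℝ | 1 - b < p.2}
          ≤ μ ({p : ℝ × ℝ | 1 - b ≤ p.2 ∧ p.2 ≤ 1} ∪ {p : ℝ × ℝ | 1 < p.2}) := measure_mono hcov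
        _ ≤ μ {p : ℝ × ℝ | 1 - b ≤ p.2 ∧ p.2 ≤ 1} + μ {p : ℝ × ℝ | 1 < p.2} := measure_union_le _ _
        _ = ENNReal.ofReal b := by rw [hm, hy_big, add_zero]
    · have hcov : {p : ℝ × ℝ | 1 - b ≤ p.2 ∧ p.2 ≤ 1} ⊆
          {p : ℝ × ℝ | 1 - b < p.2} ∪ {p : ℝ × ℝ | p.2 = 1 - b} := by
        intro p hp
        rcases eq_or_lt_of_le hp.1 with h | h
        · exact Or.inr h.symm
        · exact Or.inl h
      calc ENNReal.ofReal b = μ {p : ℝ × ℝ | 1 - b ≤ p.2 ∧ p.2 ≤ 1} := hm.symm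
        _ ≤ μ ({p : ℝ × ℝ | 1 - b < p.2} ∪ {p : ℝ × ℝ | p.2 = 1 - b}) := measure_mono hcov
        _ ≤ μ {p : ℝ × ℝ | 1 - b < p.2} + μ {p : ℝ × ℝ | p.2 = 1 - b} := measure_union_le _ _
        _ = μ {p : ℝ × ℝ | 1 - b < p.2} := by
            rw [hly (1 - b) (by linarith) (by linarith), add_zero]
  -- dichotomy from the no-crossing hypothesis
  have hdi : ∀ a : ℝ, 0 < a → a < 1 / 2 →
      μ {p : ℝ × ℝ | p.1 ≤ a ∧ 1 / 2 ≤ p.2 ∧ p.2 < 1 - a} = 0 ∨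
      μ {p : ℝ × ℝ | a < p.1 ∧ p.1 < 1 / 2 ∧ 1 - a < p.2} = 0 := by
    intro a _ _
    set S₁ : Set (ℝ × ℝ) := {p : ℝ × ℝ | p.1 ≤ a ∧ 1 / 2 ≤ p.2 ∧ p.2 < 1 - a} with hS₁
    set S₂ : Set (ℝ × ℝ) := {p : ℝ × ℝ | a < p.1 ∧ p.1 < 1 / 2 ∧ 1 - a < p.2} with hS₂
    have hsub : S₁ ×ˢ S₂ ⊆
        {q : (ℝ × ℝ) × (ℝ × ℝ) | q.1.1 < q.2.1 ∧ q.2.1 < q.1.2 ∧ q.1.2 < q.2.2} := by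
      intro q hq
      exact ⟨lt_of_le_of_lt hq.1.1 hq.2.1, lt_of_lt_of_le hq.2.2.1 hq.1.2.1,
        lt_trans hq.1.2.2 hq.2.2.2⟩
    have hz : (μ.prod μ) (S₁ ×ˢ S₂) = 0 := measure_mono_null hsub hcross
    have hpp : μ S₁ * μ S₂ = 0 := (Measure.prod_prod S₁ S₂).symm.trans hz
    exact mul_eq_zero.1 hpp
  -- the main structural fact: for each a, both "off-antidiagonal" quadrants are null
  have hBC : ∀ a : ℝ, 0 ≤ a → a ≤ 1 / 2 →
      μ {p : ℝ × ℝ | p.1 ≤ a ∧ p.2 < 1 - a} = 0 ∧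
      μ {p : ℝ × ℝ | a < p.1 ∧ 1 - a < p.2} = 0 := by
    intro a h1 h2
    rcases eq_or_lt_of_le h1 with h0 | h0
    · -- a = 0
      have hA0 : μ {p : ℝ × ℝ | p.1 ≤ a} = 0 := by
        rw [hA a h1 h2, ← h0, ENNReal.ofReal_zero]
      constructor
      · exact measure_mono_null (fun p hp => hp.1) hA0
      · refine measure_mono_null (fun p hp => ?_) hy_big
        have : (1 : ℝ) - a = 1 := by rw [← h0]; ring
        rw [this] at hp
        exact hp.2
    · rcases eq_or_lt_of_le h2 with h12 | h12
      · -- a = 1/2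
        constructor
        · refine measure_mono_null (fun p hp => ?_) hy_small
          have : (1 : ℝ) - a = 1 / 2 := by rw [h12]; norm_num
          rw [this] at hp
          exact hp.2
        · refine measure_mono_null (fun p hp => ?_) hx_big
          rw [h12] at hp
          exact hp.1
      · -- 0 < a < 1/2 : the interesting case
        set A := μ {p : ℝ × ℝ | p.1 ≤ a ∧ 1 - a < p.2} with hAdef
        set B := μ {p : ℝ × ℝ | p.1 ≤ a ∧ p.2 < 1 - a} with hBdef
        set C := μ {p : ℝ × ℝ | a < p.1 ∧ 1 - a < p.2} with hCdef
        have mB : MeasurableSet {p : ℝ × ℝ | p.1 ≤ a ∧ p.2 < 1 - a} :=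
          (measurableSet_le measurable_fst measurable_const).inter
            (measurableSet_lt measurable_snd measurable_const)
        have mC : MeasurableSet {p : ℝ × ℝ | a < p.1 ∧ 1 - a < p.2} :=
          (measurableSet_lt measurable_const measurable_fst).inter
            (measurableSet_lt measurable_const measurable_snd)
        -- A + B = ofReal a
        have eq1 : A + B = ENNReal.ofReal a := by
          refine le_antisymm ?_ ?_
          · have hdis : Disjoint {p : ℝ × ℝ | p.1 ≤ a ∧ 1 - a < p.2}
                {p : ℝ × ℝ | p.1 ≤ a ∧ p.2 < 1 - a} := by
              rw [Set.disjoint_left]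
              intro p hp hp'
              exact absurd hp.2 (not_lt.2 (le_of_lt hp'.2))
            have := measure_union hdis mB (μ := μ)
            rw [← this]
            rw [← hA a h1 h2]
            refine measure_mono (fun p hp => ?_)
            rcases hp with hp | hp
            · exact hp.1
            · exact hp.1
          · rw [← hA a h1 h2]
            have hcov : {p : ℝ × ℝ | p.1 ≤ a} ⊆
                ({p : ℝ × ℝ | p.1 ≤ a ∧ 1 - a < p.2} ∪ {p : ℝ × ℝ | p.1 ≤ a ∧ p.2 < 1 - a})
                  ∪ {p : ℝ × ℝ | p.2 = 1 - a} := by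
              intro p hp
              rcases lt_trichotomy p.2 (1 - a) with h | h | h
              · exact Or.inl (Or.inr ⟨hp, h⟩)
              · exact Or.inr h
              · exact Or.inl (Or.inl ⟨hp, h⟩)
            calc μ {p : ℝ × ℝ | p.1 ≤ a}
                ≤ μ (({p : ℝ × ℝ | p.1 ≤ a ∧ 1 - a < p.2} ∪
                    {p : ℝ × ℝ | p.1 ≤ a ∧ p.2 < 1 - a}) ∪ {p : ℝ × ℝ | p.2 = 1 - a}) :=
                  measure_mono hcov
              _ ≤ μ ({p : ℝ × ℝ | p.1 ≤ a ∧ 1 - a < p.2} ∪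
                    {p : ℝ × ℝ | p.1 ≤ a ∧ p.2 < 1 - a}) + μ {p : ℝ × ℝ | p.2 = 1 - a} :=
                  measure_union_le _ _
              _ = μ ({p : ℝ × ℝ | p.1 ≤ a ∧ 1 - a < p.2} ∪
                    {p : ℝ × ℝ | p.1 ≤ a ∧ p.2 < 1 - a}) := by
                  rw [hly (1 - a) (by linarith) (by linarith), add_zero]
              _ ≤ A + B := measure_union_le _ _
        -- A + C = ofReal a
        have eq2 : A + C = ENNReal.ofReal a := by
          have hdis : Disjoint {p : ℝ × ℝ | p.1 ≤ a ∧ 1 - a < p.2}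
              {p : ℝ × ℝ | a < p.1 ∧ 1 - a < p.2} := by
            rw [Set.disjoint_left]
            intro p hp hp'
            exact absurd hp'.1 (not_lt.2 hp.1)
          have hun : {p : ℝ × ℝ | p.1 ≤ a ∧ 1 - a < p.2} ∪
              {p : ℝ × ℝ | a < p.1 ∧ 1 - a < p.2} = {p : ℝ × ℝ | 1 - a < p.2} := by
            ext p
            constructor
            · rintro (hp | hp)
              · exact hp.2
              · exact hp.2
            · intro hp
              by_cases h : p.1 ≤ a
              · exact Or.inl ⟨h, hp⟩
              · exact Or.inr ⟨not_le.1 h, hp⟩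
          have := measure_union hdis mC (μ := μ)
          rw [hun] at this
          rw [← this, hB a h1 h2]
        -- hence B = C
        have hAfin : A ≠ ⊤ := (measure_lt_top μ _).ne
        have hBCeq : B = C := (ENNReal.add_right_inj hAfin).1 (eq1.trans eq2.symm)
        -- dichotomy kills one, hence both
        have hB_le : B ≤ μ {p : ℝ × ℝ | p.1 ≤ a ∧ 1 / 2 ≤ p.2 ∧ p.2 < 1 - a} := by
          have hcov : {p : ℝ × ℝ | p.1 ≤ a ∧ p.2 < 1 - a} ⊆
              {p : ℝ × ℝ | p.1 ≤ a ∧ 1 / 2 ≤ p.2 ∧ p.2 < 1 - a} ∪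
              {p : ℝ × ℝ | p.2 < 1 / 2} := by
            intro p hp
            by_cases h : 1 / 2 ≤ p.2
            · exact Or.inl ⟨hp.1, h, hp.2⟩
            · exact Or.inr (not_le.1 h)
          calc B ≤ μ ({p : ℝ × ℝ | p.1 ≤ a ∧ 1 / 2 ≤ p.2 ∧ p.2 < 1 - a} ∪
              {p : ℝ × ℝ | p.2 < 1 / 2}) := measure_mono hcov
            _ ≤ μ {p : ℝ × ℝ | p.1 ≤ a ∧ 1 / 2 ≤ p.2 ∧ p.2 < 1 - a} +
                μ {p : ℝ × ℝ | p.2 < 1 / 2} := measure_union_le _ _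
            _ = μ {p : ℝ × ℝ | p.1 ≤ a ∧ 1 / 2 ≤ p.2 ∧ p.2 < 1 - a} := by
                rw [hy_small, add_zero]
        have hC_le : C ≤ μ {p : ℝ × ℝ | a < p.1 ∧ p.1 < 1 / 2 ∧ 1 - a < p.2} := by
          have hcov : {p : ℝ × ℝ | a < p.1 ∧ 1 - a < p.2} ⊆
              {p : ℝ × ℝ | a < p.1 ∧ p.1 < 1 / 2 ∧ 1 - a < p.2} ∪
              {p : ℝ × ℝ | 1 / 2 ≤ p.1} := by
            intro p hp
            by_cases h : p.1 < 1 / 2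
            · exact Or.inl ⟨hp.1, h, hp.2⟩
            · exact Or.inr (not_lt.1 h)
          calc C ≤ μ ({p : ℝ × ℝ | a < p.1 ∧ p.1 < 1 / 2 ∧ 1 - a < p.2} ∪
              {p : ℝ × ℝ | 1 / 2 ≤ p.1}) := measure_mono hcov
            _ ≤ μ {p : ℝ × ℝ | a < p.1 ∧ p.1 < 1 / 2 ∧ 1 - a < p.2} +
                μ {p : ℝ × ℝ | 1 / 2 ≤ p.1} := measure_union_le _ _
            _ = μ {p : ℝ × ℝ | a < p.1 ∧ p.1 < 1 / 2 ∧ 1 - a < p.2} := by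
                rw [hx_ge_half, add_zero]
        rcases hdi a h0 h12 with h | h
        · have hB0 : B = 0 := le_antisymm (hB_le.trans_eq h) zero_le
          exact ⟨hB0, hBCeq ▸ hB0⟩
        · have hC0 : C = 0 := le_antisymm (hC_le.trans_eq h) zero_le
          exact ⟨hBCeq.trans hC0, hC0⟩
  -- finish
  intro a b ha ha2 hb hb2
  rcases le_total a b with hab | hab
  · rw [min_eq_left hab]
    refine le_antisymm ?_ ?_
    · rw [← hA a ha ha2]
      exact measure_mono (fun p hp => hp.1.2)
    · have hBa := (hBC a ha ha2).1
      have hcov : {p : ℝ × ℝ | p.1 ≤ a} ⊆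
          (Set.Icc 0 a ×ˢ Set.Icc (1 - b) 1) ∪
          ({p : ℝ × ℝ | p.1 < 0} ∪ ({p : ℝ × ℝ | p.1 ≤ a ∧ p.2 < 1 - a} ∪
            {p : ℝ × ℝ | 1 < p.2})) := by
        intro p hp
        by_cases h0 : 0 ≤ p.1
        · by_cases h1 : 1 - b ≤ p.2
          · by_cases h2 : p.2 ≤ 1
            · exact Or.inl ⟨⟨h0, hp⟩, h1, h2⟩
            · exact Or.inr (Or.inr (Or.inr (not_le.1 h2)))
          · have : p.2 < 1 - a := lt_of_lt_of_le (not_le.1 h1) (by linarith)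
            exact Or.inr (Or.inr (Or.inl ⟨hp, this⟩))
        · exact Or.inr (Or.inl (not_le.1 h0))
      have hnull : μ ({p : ℝ × ℝ | p.1 < 0} ∪ ({p : ℝ × ℝ | p.1 ≤ a ∧ p.2 < 1 - a} ∪
          {p : ℝ × ℝ | 1 < p.2})) = 0 :=
        measure_union_null hx_neg (measure_union_null hBa hy_big)
      calc ENNReal.ofReal a = μ {p : ℝ × ℝ | p.1 ≤ a} := (hA a ha ha2).symm
        _ ≤ μ ((Set.Icc 0 a ×ˢ Set.Icc (1 - b) 1) ∪
            ({p : ℝ × ℝ | p.1 < 0} ∪ ({p : ℝ × ℝ | p.1 ≤ a ∧ p.2 < 1 - a} ∪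
              {p : ℝ × ℝ | 1 < p.2}))) := measure_mono hcov
        _ ≤ μ (Set.Icc 0 a ×ˢ Set.Icc (1 - b) 1) +
            μ ({p : ℝ × ℝ | p.1 < 0} ∪ ({p : ℝ × ℝ | p.1 ≤ a ∧ p.2 < 1 - a} ∪
              {p : ℝ × ℝ | 1 < p.2})) := measure_union_le _ _
        _ = μ (Set.Icc 0 a ×ˢ Set.Icc (1 - b) 1) := by rw [hnull, add_zero]
  · rw [min_eq_right hab]
    have hm := hmy (1 - b) 1 (by linarith) (by linarith) le_rfl
    rw [sub_sub_cancel] at hm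
    refine le_antisymm ?_ ?_
    · rw [← hm]
      exact measure_mono (fun p hp => hp.2)
    · have hCb := (hBC b hb hb2).2
      have hcov : {p : ℝ × ℝ | 1 - b ≤ p.2 ∧ p.2 ≤ 1} ⊆
          (Set.Icc 0 a ×ˢ Set.Icc (1 - b) 1) ∪
          ({p : ℝ × ℝ | p.1 < 0} ∪ ({p : ℝ × ℝ | b < p.1 ∧ 1 - b < p.2} ∪
            {p : ℝ × ℝ | p.2 = 1 - b})) := by
        intro p hp
        by_cases h0 : 0 ≤ p.1
        · by_cases h1 : p.1 ≤ a
          · exact Or.inl ⟨⟨h0, h1⟩, hp.1, hp.2⟩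
          · have hpb : b < p.1 := lt_of_le_of_lt hab (not_le.1 h1)
            rcases eq_or_lt_of_le hp.1 with h | h
            · exact Or.inr (Or.inr (Or.inr h.symm))
            · exact Or.inr (Or.inr (Or.inl ⟨hpb, h⟩))
        · exact Or.inr (Or.inl (not_le.1 h0))
      have hnull : μ ({p : ℝ × ℝ | p.1 < 0} ∪ ({p : ℝ × ℝ | b < p.1 ∧ 1 - b < p.2} ∪
          {p : ℝ × ℝ | p.2 = 1 - b})) = 0 :=
        measure_union_null hx_neg
          (measure_union_null hCb (hly (1 - b) (by linarith) (by linarith)))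
      calc ENNReal.ofReal b = μ {p : ℝ × ℝ | 1 - b ≤ p.2 ∧ p.2 ≤ 1} := hm.symm
        _ ≤ μ ((Set.Icc 0 a ×ˢ Set.Icc (1 - b) 1) ∪
            ({p : ℝ × ℝ | p.1 < 0} ∪ ({p : ℝ × ℝ | b < p.1 ∧ 1 - b < p.2} ∪
              {p : ℝ × ℝ | p.2 = 1 - b}))) := measure_mono hcov
        _ ≤ μ (Set.Icc 0 a ×ˢ Set.Icc (1 - b) 1) +
            μ ({p : ℝ × ℝ | p.1 < 0} ∪ ({p : ℝ × ℝ | b < p.1 ∧ 1 - b < p.2} ∪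
              {p : ℝ × ℝ | p.2 = 1 - b})) := measure_union_le _ _
        _ = μ (Set.Icc 0 a ×ˢ Set.Icc (1 - b) 1) := by rw [hnull, add_zero]
end
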